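/- arXiv:2511.23023 — 6 statements merged into one kernel-verified Lean document; each statement's English description precedes it below -/
import Mathlib

section
/- Let W ∈ ℝ^{n×n} satisfy Assumption 1 and let w be its normalized left Perron eigenvector. For a matrix K ∈ ℝ^{n×n}, the following are equivalent: (i) for every initial state x₀ ∈ ℝ^n, the iterates x_{t+1} = (W+K)x_t converge to the original consensus point, i.e. lim_{t→∞} (W+K)^t x₀ = (wᵀx₀)·1; (ii) K·1 = 0, wᵀK = 0, and 1 is a simple eigenvalue of W+K while every other (complex) eigenvalue of W+K has modulus strictly less than 1. -/
open Matrix Filter Polynomial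

/-- Assumption 1: `W` is row-stochastic, `1` is a simple eigenvalue of `W` (over `ℂ`),
all other eigenvalues have modulus `< 1`, and `w` is the normalized left Perron
eigenvector of `W`. -/
def Assumption1 {n : ℕ} (W : Matrix (Fin n) (Fin n) ℝ) (w : Fin n → ℝ) : Prop :=
  (∀ i j, 0 ≤ W i j) ∧
  W *ᵥ (1 : Fin n → ℝ) = 1 ∧
  ((W.map (algebraMap ℝ ℂ)).charpoly.rootMultiplicity 1 = 1) ∧
  (∀ μ : ℂ, (W.map (algebraMap ℝ ℂ)).charpoly.IsRoot μ → μ ≠ 1 → ‖μ‖ < 1) ∧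
  w ᵥ* W = w ∧
  w ⬝ᵥ (1 : Fin n → ℝ) = 1

namespace Stmt0Helpers

attribute [local instance] Matrix.linftyOpNormedRing Matrix.linftyOpNormedAlgebra
  Matrix.linftyOpNormedAddCommGroup Matrix.linftyOpNormedSpace

variable {n : ℕ}

lemma charpolyEvalAux (B : Matrix (Fin n) (Fin n) ℂ) (x : ℂ) :
    B.charpoly.eval x = (Matrix.scalar (Fin n) x - B).det := by
  rw [Matrix.charpoly, eval_det, Matrix.matPolyEquiv_charmatrix]
  simp

lemma algebraMapScalar (x : ℂ) :
    (algebraMap ℂ (Matrix (Fin n) (Fin n) ℂ)) x = Matrix.scalar (Fin n) x := rfl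

lemma rootIffSpectrum (B : Matrix (Fin n) (Fin n) ℂ) (μ : ℂ) :
    B.charpoly.IsRoot μ ↔ μ ∈ spectrum ℂ B := by
  rw [spectrum.mem_iff, IsRoot, charpolyEvalAux, ← algebraMapScalar,
    Matrix.isUnit_iff_isUnit_det, isUnit_iff_ne_zero, not_not]

/-- eigenvector from a root of the charpoly -/
lemma exists_eigvec (B : Matrix (Fin n) (Fin n) ℂ) (μ : ℂ) (h : B.charpoly.IsRoot μ) :
    ∃ v : Fin n → ℂ, v ≠ 0 ∧ B *ᵥ v = μ • v := by
  rw [IsRoot, charpolyEvalAux] at h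
  obtain ⟨v, hv0, hv⟩ := (Matrix.exists_mulVec_eq_zero_iff.2 h)
  refine ⟨v, hv0, ?_⟩
  have : Matrix.scalar (Fin n) μ *ᵥ v = μ • v := by
    ext i; simp [Matrix.scalar, Matrix.mulVec_diagonal]
  rw [Matrix.sub_mulVec, this, sub_eq_zero] at hv
  exact hv.symm

lemma isRoot_of_eigvec (B : Matrix (Fin n) (Fin n) ℂ) (μ : ℂ) (v : Fin n → ℂ)
    (hv : v ≠ 0) (h : B *ᵥ v = μ • v) : B.charpoly.IsRoot μ := by
  rw [IsRoot, charpolyEvalAux, ← Matrix.exists_mulVec_eq_zero_iff]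
  refine ⟨v, hv, ?_⟩
  have hs : Matrix.scalar (Fin n) μ *ᵥ v = μ • v := by
    ext i; simp [Matrix.scalar, Matrix.mulVec_diagonal]
  rw [Matrix.sub_mulVec, hs, h, sub_self]

lemma entry_nnnorm_le (B : Matrix (Fin n) (Fin n) ℂ) (i j : Fin n) : ‖B i j‖₊ ≤ ‖B‖₊ := by
  rw [Matrix.linfty_opNNNorm_def]
  calc ‖B i j‖₊ ≤ ∑ k, ‖B i k‖₊ :=
        Finset.single_le_sum (f := fun k => ‖B i k‖₊) (fun _ _ => zero_le) (Finset.mem_univ j)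
    _ ≤ _ := Finset.le_sup (f := fun i => ∑ k, ‖B i k‖₊) (Finset.mem_univ i)

lemma pow_entries_tendsto_zero (B : Matrix (Fin n) (Fin n) ℂ)
    (h : ∀ μ : ℂ, B.charpoly.IsRoot μ → ‖μ‖₊ < 1) (i j : Fin n) :
    Tendsto (fun t : ℕ => (B ^ t) i j) atTop (nhds 0) := by
  haveI : Nonempty (Fin n) := ⟨i⟩
  haveI : CompleteSpace (Matrix (Fin n) (Fin n) ℂ) := FiniteDimensional.complete ℂ _
  have hρ : spectralRadius ℂ B < 1 := by
    have := spectrum.spectralRadius_lt_of_forall_lt (a := B) (r := 1)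
      (fun z hz => h z ((rootIffSpectrum B z).2 hz))
    simpa using this
  obtain ⟨r, hr1, hr2⟩ := ENNReal.lt_iff_exists_nnreal_btwn.1 hρ
  have hgel := spectrum.pow_nnnorm_pow_one_div_tendsto_nhds_spectralRadius B
  have hev : ∀ᶠ t : ℕ in atTop, (‖B ^ t‖₊ : ENNReal) ^ (1 / (t : ℝ)) < r :=
    hgel.eventually_lt_const hr1
  have hbound : ∀ᶠ t : ℕ in atTop, ‖(B ^ t) i j‖ ≤ (r : ℝ) ^ t := by
    filter_upwards [hev, eventually_ge_atTop 1] with t ht ht1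
    have htpos : (0 : ℝ) < t := by exact_mod_cast ht1
    have h2 : ((‖B ^ t‖₊ : ENNReal) ^ (1 / (t : ℝ))) ^ (t : ℝ) < (r : ENNReal) ^ (t : ℝ) :=
      ENNReal.rpow_lt_rpow ht htpos
    rw [← ENNReal.rpow_mul, one_div, inv_mul_cancel₀ htpos.ne', ENNReal.rpow_one] at h2
    have h3 : (‖B ^ t‖₊ : ENNReal) < ((r ^ t : NNReal) : ENNReal) := by
      rwa [ENNReal.coe_pow, ← ENNReal.rpow_natCast (r : ENNReal) t]
    have h4 : ‖B ^ t‖₊ < r ^ t := by exact_mod_cast h3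
    calc ‖(B ^ t) i j‖ ≤ ‖B ^ t‖ := entry_nnnorm_le (B ^ t) i j
      _ ≤ (r : ℝ) ^ t := by exact_mod_cast h4.le
  have hgeo : Tendsto (fun t : ℕ => (r : ℝ) ^ t) atTop (nhds 0) :=
    tendsto_pow_atTop_nhds_zero_of_lt_one r.2 (by exact_mod_cast hr2)
  rw [tendsto_zero_iff_norm_tendsto_zero]
  exact squeeze_zero' (Eventually.of_forall fun t => norm_nonneg _) hbound hgeo

lemma charpoly_rankone (A : Matrix (Fin n) (Fin n) ℂ) (u v : Fin n → ℂ)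
    (hu : A *ᵥ u = u) (huv : v ⬝ᵥ u = 1) :
    (A - vecMulVec u v).charpoly * (X - C 1) = A.charpoly * X := by
  apply Polynomial.eq_of_infinite_eval_eq
  have hg0 : (A.charpoly * (X - C 1) : ℂ[X]) ≠ 0 :=
    mul_ne_zero (A.charpoly_monic.ne_zero) (X_sub_C_ne_zero 1)
  refine Set.Infinite.mono ?_ ((Polynomial.finite_setOf_isRoot hg0).infinite_compl)
  intro x hx
  simp only [Set.mem_compl_iff, Set.mem_setOf_eq, IsRoot, eval_mul, eval_sub, eval_X, eval_C,
    mul_eq_zero, not_or] at hx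
  obtain ⟨hq0, hx1'⟩ := hx
  rw [charpolyEvalAux] at hq0
  set B := Matrix.scalar (Fin n) x - A with hB
  have hdetB : IsUnit B.det := isUnit_iff_ne_zero.2 hq0
  have hscal : ∀ y : Fin n → ℂ, Matrix.scalar (Fin n) x *ᵥ y = x • y := by
    intro y; ext i; simp [Matrix.scalar, Matrix.mulVec_diagonal]
  have hBu : B *ᵥ u = (x - 1) • u := by
    rw [hB, Matrix.sub_mulVec, hscal, hu, sub_smul, one_smul]
  have hBinvu : B⁻¹ *ᵥ u = (x - 1)⁻¹ • u := by
    have h1 : B⁻¹ *ᵥ (B *ᵥ u) = u := by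
      rw [Matrix.mulVec_mulVec, Matrix.nonsing_inv_mul B hdetB, Matrix.one_mulVec]
    rw [hBu, Matrix.mulVec_smul] at h1
    have h2 : (x - 1)⁻¹ • ((x - 1) • (B⁻¹ *ᵥ u)) = (x - 1)⁻¹ • u := by rw [h1]
    rwa [smul_smul, inv_mul_cancel₀ hx1', one_smul] at h2
  have hkey : (B + vecMulVec u v).det = B.det * (1 + (x - 1)⁻¹) := by
    rw [Matrix.vecMulVec_eq Unit u v, Matrix.det_add_replicateCol_mul_replicateRow hdetB u v]
    congr 1
    rw [Matrix.det_unique]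
    have hcol : B⁻¹ * Matrix.replicateCol Unit u = Matrix.replicateCol Unit ((x - 1)⁻¹ • u) := by
      rw [← hBinvu]; ext i k; simp [Matrix.mul_apply, Matrix.mulVec, Matrix.replicateCol, dotProduct]
    rw [Matrix.mul_assoc, hcol]
    simp only [Matrix.add_apply, Matrix.one_apply_eq, Matrix.replicateRow_mul_replicateCol_apply]
    rw [dotProduct_smul, huv]
    simp
  simp only [Set.mem_setOf_eq, eval_mul, eval_sub, eval_X, eval_C]
  rw [charpolyEvalAux, charpolyEvalAux,
    show Matrix.scalar (Fin n) x - (A - vecMulVec u v) = B + vecMulVec u v by rw [hB]; abel,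
    ← hB, hkey]
  field_simp
  ring

section ProjAux

variable (M : Matrix (Fin n) (Fin n) ℝ) (w : Fin n → ℝ)

lemma projMulVec (x : Fin n → ℝ) : vecMulVec (1 : Fin n → ℝ) w *ᵥ x = (w ⬝ᵥ x) • 1 := by
  ext i
  simp [Matrix.vecMulVec_apply, Matrix.mulVec, dotProduct, mul_comm]

lemma mulProj (hM1 : M *ᵥ 1 = 1) : M * vecMulVec (1 : Fin n → ℝ) w = vecMulVec 1 w := by
  ext i j
  have := congrFun hM1 i
  simp only [Matrix.mulVec, dotProduct, Pi.one_apply, mul_one] at this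
  simp [Matrix.mul_apply, Matrix.vecMulVec_apply, ← Finset.sum_mul, this]

lemma projMul (hwM : w ᵥ* M = w) : vecMulVec (1 : Fin n → ℝ) w * M = vecMulVec 1 w := by
  ext i j
  have := congrFun hwM j
  simp only [Matrix.vecMul, dotProduct] at this
  simp [Matrix.mul_apply, Matrix.vecMulVec_apply, this]

lemma projProj (hw1 : w ⬝ᵥ (1 : Fin n → ℝ) = 1) :
    vecMulVec (1 : Fin n → ℝ) w * vecMulVec (1 : Fin n → ℝ) w = vecMulVec 1 w := by
  have := projMul (vecMulVec (1 : Fin n → ℝ) w) w ?_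
  · exact this
  · ext j
    simp only [Matrix.vecMul, dotProduct, Matrix.vecMulVec_apply, Pi.one_apply, one_mul]
    rw [← Finset.sum_mul]
    have : ∑ k, w k = w ⬝ᵥ (1 : Fin n → ℝ) := by simp [dotProduct]
    rw [this, hw1, one_mul]

lemma powSubProj (hM1 : M *ᵥ 1 = 1) (hwM : w ᵥ* M = w) (hw1 : w ⬝ᵥ (1 : Fin n → ℝ) = 1) :
    ∀ t : ℕ, (M - vecMulVec 1 w) ^ (t + 1) = M ^ (t + 1) - vecMulVec 1 w := by
  set P := vecMulVec (1 : Fin n → ℝ) w with hP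
  have hMP := mulProj M w hM1
  have hPM := projMul M w hwM
  have hPP := projProj w hw1
  have hMk : ∀ k : ℕ, M ^ k * P = P := by
    intro k
    induction k with
    | zero => simp
    | succ k ih => rw [pow_succ, Matrix.mul_assoc, hMP, ih]
  intro t
  induction t with
  | zero => simp
  | succ t ih =>
    rw [pow_succ, ih, Matrix.sub_mul, Matrix.mul_sub, Matrix.mul_sub, hMk, hPM, hPP, ← pow_succ]
    abel

end ProjAux

lemma roots_shift (M : Matrix (Fin n) (Fin n) ℝ) (w : Fin n → ℝ)
    (hM1 : M *ᵥ 1 = 1) (hw1 : w ⬝ᵥ (1 : Fin n → ℝ) = 1) :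
    ((M - vecMulVec 1 w).map (algebraMap ℝ ℂ)).charpoly.roots + {1}
      = (M.map (algebraMap ℝ ℂ)).charpoly.roots + {0} := by
  set φ := algebraMap ℝ ℂ
  have hmapsub : (M - vecMulVec 1 w).map φ
      = M.map φ - vecMulVec (1 : Fin n → ℂ) (fun i => φ (w i)) := by
    ext i j
    simp [Matrix.map_apply, Matrix.vecMulVec_apply, φ]
  have hu : M.map φ *ᵥ (1 : Fin n → ℂ) = 1 := by
    ext i
    have := congrFun hM1 i
    simp only [Matrix.mulVec, dotProduct, Pi.one_apply, mul_one] at this ⊢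
    rw [show ∑ j, (M.map φ) i j = φ (∑ j, M i j) by simp [Matrix.map_apply, φ], this]
    simp [φ]
  have huv : (fun i => φ (w i)) ⬝ᵥ (1 : Fin n → ℂ) = 1 := by
    have := hw1
    simp only [dotProduct, Pi.one_apply, mul_one] at this ⊢
    rw [show ∑ j, φ (w j) = φ (∑ j, w j) by simp [φ], this]
    simp [φ]
  have hid := charpoly_rankone (M.map φ) 1 (fun i => φ (w i)) hu huv
  rw [← hmapsub] at hid
  have hp0 : ((M - vecMulVec 1 w).map φ).charpoly ≠ 0 := (Matrix.charpoly_monic _).ne_zero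
  have hq0 : (M.map φ).charpoly ≠ 0 := (Matrix.charpoly_monic _).ne_zero
  have := congrArg Polynomial.roots hid
  rwa [Polynomial.roots_mul (mul_ne_zero hp0 (X_sub_C_ne_zero 1)),
    Polynomial.roots_mul (mul_ne_zero hq0 X_ne_zero), roots_X_sub_C, roots_X] at this

lemma mapPowEntry (N : Matrix (Fin n) (Fin n) ℝ) (t : ℕ) (i j : Fin n) :
    ((N.map (algebraMap ℝ ℂ)) ^ t) i j = ((N ^ t) i j : ℂ) := by
  have : (N.map (algebraMap ℝ ℂ)) ^ t = (N ^ t).map (algebraMap ℝ ℂ) := by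
    simpa [RingHom.mapMatrix_apply] using (map_pow ((algebraMap ℝ ℂ).mapMatrix) N t).symm
  rw [this]
  simp [Matrix.map_apply]

/-- the ⇐ direction -/
lemma conv_of_spectral (M : Matrix (Fin n) (Fin n) ℝ) (w : Fin n → ℝ)
    (hM1 : M *ᵥ 1 = 1) (hwM : w ᵥ* M = w) (hw1 : w ⬝ᵥ (1 : Fin n → ℝ) = 1)
    (hm : ((M.map (algebraMap ℝ ℂ)).charpoly.rootMultiplicity 1 = 1))
    (hroots : ∀ μ : ℂ, (M.map (algebraMap ℝ ℂ)).charpoly.IsRoot μ → μ ≠ 1 → ‖μ‖ < 1)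
    (x₀ : Fin n → ℝ) :
    Tendsto (fun t : ℕ => (M ^ t) *ᵥ x₀) atTop (nhds ((w ⬝ᵥ x₀) • (1 : Fin n → ℝ))) := by
  set φ := algebraMap ℝ ℂ
  set P : Matrix (Fin n) (Fin n) ℝ := vecMulVec 1 w with hP
  set p := ((M - P).map φ).charpoly with hp
  set q := (M.map φ).charpoly with hq
  have hp0 : p ≠ 0 := (Matrix.charpoly_monic _).ne_zero
  have hq0 : q ≠ 0 := (Matrix.charpoly_monic _).ne_zero
  have hmult : p.roots + {1} = q.roots + {0} := roots_shift M w hM1 hw1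
  have hsmall : ∀ μ : ℂ, p.IsRoot μ → ‖μ‖₊ < 1 := by
    intro μ hμ
    have hmem : μ ∈ p.roots := (Polynomial.mem_roots hp0).2 hμ
    have h1 : μ ∈ q.roots ∨ μ = 0 := by
      have h2 : μ ∈ q.roots + ({0} : Multiset ℂ) := by
        rw [← hmult]; exact Multiset.mem_add.2 (Or.inl hmem)
      rcases Multiset.mem_add.1 h2 with h | h
      exacts [Or.inl h, Or.inr (by simpa using h)]
    rcases h1 with h | rfl
    · by_cases hμ1 : μ = 1
      · exfalso
        subst hμ1
        rw [← Polynomial.count_roots] at hm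
        have h1 : Multiset.count 1 (p.roots + ({1} : Multiset ℂ)) = Multiset.count 1 p.roots + 1 := by
          rw [Multiset.count_add, Multiset.count_singleton_self]
        have h2 : Multiset.count 1 (q.roots + ({0} : Multiset ℂ)) = 1 := by
          rw [Multiset.count_add, hm, Multiset.count_singleton]
          norm_num
        have hcount : Multiset.count 1 p.roots + 1 = 1 := by rw [← h1, hmult, h2]
        have hge : 1 ≤ Multiset.count 1 p.roots := Multiset.one_le_count_iff_mem.2 hmem
        omega
      · have habs := hroots μ ((Polynomial.mem_roots hq0).1 h) hμ1
        rw [← NNReal.coe_lt_coe, coe_nnnorm, NNReal.coe_one]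
        exact habs
    · simp
  have hent0 : ∀ i j, Tendsto (fun t : ℕ => ((M - P) ^ t) i j) atTop (nhds 0) := by
    intro i j
    have hc := pow_entries_tendsto_zero ((M - P).map φ) hsmall i j
    rw [tendsto_zero_iff_norm_tendsto_zero] at hc ⊢
    convert hc using 2 with t
    rw [mapPowEntry, Complex.norm_real]
  rw [tendsto_pi_nhds]
  intro i
  have hsum : Tendsto (fun t : ℕ => (((M - P) ^ t) *ᵥ x₀) i) atTop (nhds 0) := by
    have h2 := tendsto_finset_sum Finset.univ
      (fun j (_ : j ∈ Finset.univ) => (hent0 i j).mul_const (x₀ j))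
    simp only [zero_mul, Finset.sum_const_zero] at h2
    convert h2 using 2 with t
    simp [Matrix.mulVec, dotProduct]
  have heq : ∀ᶠ t : ℕ in atTop,
      (((M - P) ^ t) *ᵥ x₀) i + w ⬝ᵥ x₀ = ((M ^ t) *ᵥ x₀) i := by
    filter_upwards [eventually_ge_atTop 1] with t ht
    obtain ⟨s, rfl⟩ : ∃ s, t = s + 1 := ⟨t - 1, by omega⟩
    rw [powSubProj M w hM1 hwM hw1 s, Matrix.sub_mulVec]
    have hPx : P *ᵥ x₀ = (w ⬝ᵥ x₀) • 1 := projMulVec w x₀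
    rw [hPx]
    simp
  have hfin := hsum.add (tendsto_const_nhds (x := w ⬝ᵥ x₀) (f := atTop))
  rw [zero_add] at hfin
  have := hfin.congr' heq
  simpa using this

/-- the ⇒ direction, spectral part -/
lemma spectral_of_conv (hn : 0 < n) (M : Matrix (Fin n) (Fin n) ℝ) (w : Fin n → ℝ)
    (hM1 : M *ᵥ 1 = 1) (hwM : w ᵥ* M = w) (hw1 : w ⬝ᵥ (1 : Fin n → ℝ) = 1)
    (hent : ∀ i j, Tendsto (fun t : ℕ => (M ^ t) i j) atTop (nhds (w j))) :
    ((M.map (algebraMap ℝ ℂ)).charpoly.rootMultiplicity 1 = 1) ∧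
      (∀ μ : ℂ, (M.map (algebraMap ℝ ℂ)).charpoly.IsRoot μ → μ ≠ 1 → ‖μ‖ < 1) := by
  set φ := algebraMap ℝ ℂ
  set P : Matrix (Fin n) (Fin n) ℝ := vecMulVec 1 w with hP
  set p := ((M - P).map φ).charpoly with hp
  set q := (M.map φ).charpoly with hq
  have hp0 : p ≠ 0 := (Matrix.charpoly_monic _).ne_zero
  have hq0 : q ≠ 0 := (Matrix.charpoly_monic _).ne_zero
  have hmult : p.roots + {1} = q.roots + {0} := roots_shift M w hM1 hw1
  have hent0 : ∀ i j, Tendsto (fun t : ℕ => ((M - P) ^ t) i j) atTop (nhds 0) := by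
    intro i j
    have h1 : Tendsto (fun t : ℕ => (M ^ t) i j - w j) atTop (nhds 0) := by
      simpa using (hent i j).sub_const (w j)
    apply h1.congr'
    filter_upwards [eventually_ge_atTop 1] with t ht
    obtain ⟨s, rfl⟩ : ∃ s, t = s + 1 := ⟨t - 1, by omega⟩
    rw [powSubProj M w hM1 hwM hw1 s]
    simp [Matrix.sub_apply, hP, Matrix.vecMulVec_apply]
  have hentC : ∀ i j, Tendsto (fun t : ℕ => (((M - P).map φ) ^ t) i j) atTop (nhds 0) := by
    intro i j
    have h2 : Tendsto (fun t : ℕ => ((((M - P) ^ t) i j : ℝ) : ℂ)) atTop (nhds ((0 : ℝ) : ℂ)) :=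
      (Complex.continuous_ofReal.tendsto _).comp (hent0 i j)
    rw [Complex.ofReal_zero] at h2
    exact h2.congr fun t => (mapPowEntry (M - P) t i j).symm
  have hsmall : ∀ μ : ℂ, p.IsRoot μ → ‖μ‖₊ < 1 := by
    intro μ hμ
    obtain ⟨v, hv0, hvec⟩ := exists_eigvec _ μ hμ
    have hit : ∀ t : ℕ, (((M - P).map φ) ^ t) *ᵥ v = μ ^ t • v := by
      intro t
      induction t with
      | zero => simp
      | succ t ih =>
        rw [pow_succ, ← Matrix.mulVec_mulVec, hvec, Matrix.mulVec_smul, ih, smul_smul, ← pow_succ']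
    obtain ⟨i, hvi⟩ := Function.ne_iff.1 hv0
    simp only [Pi.zero_apply] at hvi
    have h1 : Tendsto (fun t : ℕ => μ ^ t * v i) atTop (nhds 0) := by
      have h2 := tendsto_finset_sum Finset.univ
        (fun j (_ : j ∈ Finset.univ) => (hentC i j).mul_const (v j))
      simp only [zero_mul, Finset.sum_const_zero] at h2
      apply h2.congr
      intro t
      have := congrFun (hit t) i
      simp only [Matrix.mulVec, dotProduct, Pi.smul_apply, smul_eq_mul] at this
      exact this
    have h2 : Tendsto (fun t : ℕ => μ ^ t) atTop (nhds 0) := by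
      have h3 := h1.mul_const (v i)⁻¹
      simp only [zero_mul] at h3
      apply h3.congr
      intro t
      rw [mul_assoc, mul_inv_cancel₀ hvi, mul_one]
    by_contra hge
    push_neg at hge
    have hnorm : Tendsto (fun t : ℕ => ‖μ ^ t‖) atTop (nhds 0) := by
      simpa using h2.norm
    have hge' : (1 : ℝ) ≤ ‖μ‖ := by
      have := hge
      rw [← NNReal.coe_le_coe] at this
      simpa using this
    have hlb : ∀ t : ℕ, (1 : ℝ) ≤ ‖μ ^ t‖ := by
      intro t
      rw [norm_pow]
      exact one_le_pow₀ hge'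
    have := ge_of_tendsto' hnorm hlb
    linarith
  constructor
  · have hmemq : (1 : ℂ) ∈ q.roots := by
      rw [Polynomial.mem_roots hq0]
      have hu : M.map φ *ᵥ (1 : Fin n → ℂ) = 1 := by
        ext i
        have := congrFun hM1 i
        simp only [Matrix.mulVec, dotProduct, Pi.one_apply, mul_one] at this ⊢
        rw [show ∑ j, (M.map φ) i j = φ (∑ j, M i j) by simp [Matrix.map_apply, φ], this]
        simp [φ]
      have hone : (1 : Fin n → ℂ) ≠ 0 := by
        intro hcontra
        have := congrFun hcontra ⟨0, hn⟩
        simp at this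
      exact isRoot_of_eigvec _ 1 1 hone (by rw [hu, one_smul])
    have hc1 : Multiset.count 1 p.roots = 0 := by
      rw [Multiset.count_eq_zero]
      intro hmem
      have := hsmall 1 ((Polynomial.mem_roots hp0).1 hmem)
      simp at this
    have h1 : Multiset.count 1 (p.roots + ({1} : Multiset ℂ)) = 1 := by
      rw [Multiset.count_add, hc1, Multiset.count_singleton_self]
    have h2 : Multiset.count 1 (q.roots + ({0} : Multiset ℂ)) = Multiset.count 1 q.roots := by
      rw [Multiset.count_add, Multiset.count_singleton]
      norm_num
    rw [← Polynomial.count_roots, ← h2, ← hmult, h1]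
  · intro μ hroot hne
    have hmemq : μ ∈ q.roots := (Polynomial.mem_roots hq0).2 hroot
    have : μ ∈ p.roots + ({1} : Multiset ℂ) := by
      rw [hmult]; exact Multiset.mem_add.2 (Or.inl hmemq)
    rcases Multiset.mem_add.1 this with h | h
    · have := hsmall μ ((Polynomial.mem_roots hp0).1 h)
      rw [← NNReal.coe_lt_coe, coe_nnnorm, NNReal.coe_one] at this
      exact this
    · exact absurd (Multiset.mem_singleton.1 h) hne

end Stmt0Helpers

theorem stmt0 {n : ℕ} (W : Matrix (Fin n) (Fin n) ℝ) (w : Fin n → ℝ)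
    (hW : Assumption1 W w) (K : Matrix (Fin n) (Fin n) ℝ) :
    (∀ x₀ : Fin n → ℝ,
        Tendsto (fun t : ℕ => ((W + K) ^ t) *ᵥ x₀) atTop
          (nhds ((w ⬝ᵥ x₀) • (1 : Fin n → ℝ)))) ↔
      (K *ᵥ (1 : Fin n → ℝ) = 0 ∧
       w ᵥ* K = 0 ∧
       (((W + K).map (algebraMap ℝ ℂ)).charpoly.rootMultiplicity 1 = 1) ∧
       (∀ μ : ℂ, ((W + K).map (algebraMap ℝ ℂ)).charpoly.IsRoot μ → μ ≠ 1 →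
          ‖μ‖ < 1)) := by
  obtain ⟨-, hW1, hWm, hWroots, hwW, hw1⟩ := hW
  rcases Nat.eq_zero_or_pos n with hn0 | hn
  · exfalso
    subst hn0
    have hcp : (W.map (algebraMap ℝ ℂ)).charpoly = 1 := by
      rw [Matrix.charpoly, Matrix.det_isEmpty]
    rw [hcp, Polynomial.rootMultiplicity_eq_zero (by simp [Polynomial.IsRoot])] at hWm
    exact one_ne_zero hWm.symm
  constructor
  · intro hconv
    have hcont : Continuous (fun y : Fin n → ℝ => (W + K) *ᵥ y) := by
      refine continuous_pi fun i => ?_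
      simp only [Matrix.mulVec, dotProduct]
      exact continuous_finset_sum _ fun j _ => continuous_const.mul (continuous_apply j)
    have hM1 : (W + K) *ᵥ (1 : Fin n → ℝ) = 1 := by
      have hc := hconv 1
      rw [hw1, one_smul] at hc
      have hc1 : Tendsto (fun t : ℕ => ((W + K) ^ (t + 1)) *ᵥ (1 : Fin n → ℝ)) atTop
          (nhds ((W + K) *ᵥ (1 : Fin n → ℝ))) := by
        have h2 := (hcont.tendsto _).comp hc
        apply h2.congr
        intro t
        show (W + K) *ᵥ (((W + K) ^ t) *ᵥ 1) = _
        rw [Matrix.mulVec_mulVec, ← pow_succ']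
      have hc2 : Tendsto (fun t : ℕ => ((W + K) ^ (t + 1)) *ᵥ (1 : Fin n → ℝ)) atTop
          (nhds 1) := hc.comp (tendsto_add_atTop_nat 1)
      exact tendsto_nhds_unique hc1 hc2
    have hK1 : K *ᵥ (1 : Fin n → ℝ) = 0 := by
      have h0 : W *ᵥ (1 : Fin n → ℝ) + K *ᵥ 1 = 1 := by rw [← Matrix.add_mulVec, hM1]
      rw [hW1] at h0
      have := congrArg (fun z => z - (1 : Fin n → ℝ)) h0
      simpa using this
    have hwM : w ᵥ* (W + K) = w := by
      funext j
      have hx := hconv (Pi.single j 1)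
      have hx' := hconv ((W + K) *ᵥ Pi.single j 1)
      have h1 : Tendsto (fun t : ℕ => ((W + K) ^ (t + 1)) *ᵥ Pi.single j 1) atTop
          (nhds ((w ⬝ᵥ Pi.single j 1) • 1)) := hx.comp (tendsto_add_atTop_nat 1)
      have h2 : Tendsto (fun t : ℕ => ((W + K) ^ (t + 1)) *ᵥ Pi.single j 1) atTop
          (nhds ((w ⬝ᵥ ((W + K) *ᵥ Pi.single j 1)) • 1)) := by
        apply hx'.congr
        intro t
        rw [Matrix.mulVec_mulVec, ← pow_succ]
      have h3 := tendsto_nhds_unique h2 h1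
      have h4 := congrFun h3 ⟨0, hn⟩
      simp only [Pi.smul_apply, Pi.one_apply, smul_eq_mul, mul_one] at h4
      rw [Matrix.dotProduct_mulVec] at h4
      simpa [dotProduct_single] using h4
    have hwK : w ᵥ* K = 0 := by
      have h0 : w ᵥ* W + w ᵥ* K = w := by rw [← Matrix.vecMul_add, hwM]
      rw [hwW] at h0
      have := congrArg (fun z => z - w) h0
      simpa using this
    have hent : ∀ i j, Tendsto (fun t : ℕ => ((W + K) ^ t) i j) atTop (nhds (w j)) := by
      intro i j
      have hx := hconv (Pi.single j 1)
      rw [tendsto_pi_nhds] at hx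
      have h5 := hx i
      simp only [Pi.smul_apply, Pi.one_apply, smul_eq_mul, mul_one,
        dotProduct_single] at h5
      apply h5.congr
      intro t
      rw [Matrix.mulVec_single]
      simp
    obtain ⟨hm, hroots⟩ := Stmt0Helpers.spectral_of_conv hn (W + K) w hM1 hwM hw1 hent
    exact ⟨hK1, hwK, hm, hroots⟩
  · rintro ⟨hK1, hwK, hm, hroots⟩
    intro x₀
    refine Stmt0Helpers.conv_of_spectral (W + K) w ?_ ?_ hw1 hm hroots x₀
    · rw [Matrix.add_mulVec, hW1, hK1, add_zero]
    · rw [Matrix.vecMul_add, hwW, hwK, add_zero]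
end

section
/- Let W ∈ ℝ^{n×n} satisfy Assumption 1 with normalized left Perron eigenvector w, and let K₀ ∈ ℝ^{n×n} be a nonzero matrix satisfying K₀·1 = 0 and wᵀK₀ = 0. Then there exists ε > 0 such that the matrix K = εK₀ satisfies: 1 is a simple eigenvalue of W+K and every other (complex) eigenvalue of W+K has modulus strictly less than 1. -/
open Matrix Filter Polynomial

attribute [local instance] Matrix.linftyOpNormedRing Matrix.linftyOpNormedAlgebra

section aux

lemma my_eval_charpoly {n : ℕ} (M : Matrix (Fin n) (Fin n) ℂ) (x : ℂ) :
    M.charpoly.eval x = (Matrix.scalar (Fin n) x - M).det := by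
  rw [Matrix.charpoly, ← Polynomial.coe_evalRingHom, RingHom.map_det]
  refine congrArg Matrix.det ?_
  ext i j
  by_cases h : i = j
  · subst h
    simp [charmatrix_apply_eq, Matrix.scalar_apply, Matrix.diagonal_apply_eq, Matrix.sub_apply]
  · simp [charmatrix_apply_ne _ _ _ h, Matrix.scalar_apply, Matrix.diagonal_apply_ne _ h,
      Matrix.sub_apply]

lemma my_scalar_eq {n : ℕ} (x : ℂ) :
    algebraMap ℂ (Matrix (Fin n) (Fin n) ℂ) x = Matrix.scalar (Fin n) x := by
  rw [Matrix.algebraMap_eq_diagonal, Matrix.scalar_apply]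
  rfl

lemma my_mem_spectrum_iff {n : ℕ} (M : Matrix (Fin n) (Fin n) ℂ) (μ : ℂ) :
    μ ∈ spectrum ℂ M ↔ M.charpoly.IsRoot μ := by
  rw [spectrum.mem_iff, Matrix.isUnit_iff_isUnit_det, isUnit_iff_ne_zero, not_ne_iff,
    IsRoot, my_eval_charpoly, my_scalar_eq]

lemma my_deflate {n : ℕ} (M : Matrix (Fin n) (Fin n) ℂ) (u v : Fin n → ℂ)
    (hv : M *ᵥ v = v) (huv : u ⬝ᵥ v = 1) :
    (X - C 1) * (M - vecMulVec v u).charpoly = X * M.charpoly := by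
  apply Polynomial.eq_of_infinite_eval_eq
  have hfin : ({x : ℂ | M.charpoly.IsRoot x} ∪ {1}).Finite :=
    (Polynomial.finite_setOf_isRoot M.charpoly_monic.ne_zero).union (Set.finite_singleton 1)
  refine Set.Infinite.mono ?_ hfin.infinite_compl
  intro x hx
  simp only [Set.mem_compl_iff, Set.mem_union, Set.mem_setOf_eq, Set.mem_singleton_iff,
    not_or] at hx
  obtain ⟨hroot, hx1⟩ := hx
  have hx1' : x - 1 ≠ 0 := sub_ne_zero.mpr hx1
  set A := Matrix.scalar (Fin n) x - M with hA
  have hdetA : A.det ≠ 0 := by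
    rw [← my_eval_charpoly]; exact hroot
  have hAu : IsUnit A.det := isUnit_iff_ne_zero.mpr hdetA
  have hAv : A *ᵥ v = (x - 1) • v := by
    rw [hA, Matrix.sub_mulVec, hv, Matrix.scalar_apply, Matrix.diagonal_const_mulVec,
      sub_smul, one_smul]
  have hinv : A⁻¹ *ᵥ v = (x - 1)⁻¹ • v := by
    have h1 : (x - 1) • (A⁻¹ *ᵥ v) = v := by
      rw [← Matrix.mulVec_smul, ← hAv, Matrix.mulVec_mulVec,
        Matrix.nonsing_inv_mul _ hAu, Matrix.one_mulVec]
    have h2 := congrArg (fun y => (x - 1)⁻¹ • y) h1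
    simpa [smul_smul, inv_mul_cancel₀ hx1'] using h2
  have key : (Matrix.scalar (Fin n) x - (M - vecMulVec v u)).det
      = A.det * (1 + (x - 1)⁻¹) := by
    have : Matrix.scalar (Fin n) x - (M - vecMulVec v u)
        = A + Matrix.replicateCol Unit v * Matrix.replicateRow Unit u := by
      rw [← Matrix.vecMulVec_eq, hA]
      abel
    rw [this, Matrix.det_add_replicateCol_mul_replicateRow hAu]
    congr 1
    rw [Matrix.det_unique]
    have hcol : A⁻¹ * Matrix.replicateCol Unit v = Matrix.replicateCol Unit ((x - 1)⁻¹ • v) := by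
      rw [← Matrix.replicateCol_mulVec, hinv]
    rw [Matrix.mul_assoc, hcol]
    simp only [Pi.add_apply, Matrix.add_apply, Matrix.one_apply_eq, Matrix.replicateRow_mul_replicateCol_apply]
    rw [dotProduct_smul, huv]
    simp
  simp only [Set.mem_setOf_eq, eval_mul, eval_sub, eval_X, eval_C, eval_one]
  rw [my_eval_charpoly, my_eval_charpoly, key, ← hA]
  field_simp
  ring

lemma my_map_mulVec {n : ℕ} (A : Matrix (Fin n) (Fin n) ℝ) (x : Fin n → ℝ) :
    (A.map (algebraMap ℝ ℂ)) *ᵥ (fun i => (x i : ℂ)) = fun i => ((A *ᵥ x) i : ℂ) := by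
  funext i
  simp [Matrix.mulVec, dotProduct, Matrix.map_apply]

lemma my_map_vecMul {n : ℕ} (A : Matrix (Fin n) (Fin n) ℝ) (x : Fin n → ℝ) :
    (fun i => (x i : ℂ)) ᵥ* (A.map (algebraMap ℝ ℂ)) = fun i => ((x ᵥ* A) i : ℂ) := by
  funext i
  simp [Matrix.vecMul, dotProduct, Matrix.map_apply]

end aux


theorem stmt1 {n : ℕ} (W : Matrix (Fin n) (Fin n) ℝ) (w : Fin n → ℝ)
    (hW : Assumption1 W w) (K₀ : Matrix (Fin n) (Fin n) ℝ) (hK₀ : K₀ ≠ 0)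
    (hK₀1 : K₀ *ᵥ (1 : Fin n → ℝ) = 0) (hwK₀ : w ᵥ* K₀ = 0) :
    ∃ ε : ℝ, 0 < ε ∧
      (((W + ε • K₀).map (algebraMap ℝ ℂ)).charpoly.rootMultiplicity 1 = 1) ∧
      (∀ μ : ℂ, ((W + ε • K₀).map (algebraMap ℝ ℂ)).charpoly.IsRoot μ → μ ≠ 1 →
        ‖μ‖ < 1) := by
  obtain ⟨-, hW1, hmult, hroots, hwW, hw1⟩ := hW
  -- n ≠ 0
  rcases Nat.eq_zero_or_pos n with h0 | hn
  · exfalso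
    subst h0
    simpa [dotProduct] using hw1
  haveI : Nonempty (Fin n) := ⟨⟨0, hn⟩⟩
  haveI : Nontrivial (Matrix (Fin n) (Fin n) ℂ) := by
    refine nontrivial_of_ne 1 0 fun h => ?_
    simpa using congrFun (congrFun h ⟨0, hn⟩) ⟨0, hn⟩
  set Wc := W.map (algebraMap ℝ ℂ) with hWc
  set Kc := K₀.map (algebraMap ℝ ℂ) with hKc
  set wc : Fin n → ℂ := fun i => (w i : ℂ) with hwcdef
  have hone : (1 : Fin n → ℂ) = fun i => ((1 : Fin n → ℝ) i : ℂ) := by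
    funext i; simp
  have hzero : (0 : Fin n → ℂ) = fun i => ((0 : Fin n → ℝ) i : ℂ) := by
    funext i; simp
  have hWc1 : Wc *ᵥ (1 : Fin n → ℂ) = 1 := by
    rw [hone, my_map_mulVec, hW1]
  have hKc1 : Kc *ᵥ (1 : Fin n → ℂ) = 0 := by
    rw [hone, my_map_mulVec, hK₀1, hzero]
  have hwWc : wc ᵥ* Wc = wc := by
    rw [hwcdef, my_map_vecMul, hwW]
  have hwKc : wc ᵥ* Kc = 0 := by
    rw [hwcdef, my_map_vecMul, hwK₀, hzero]
  have hwc1 : wc ⬝ᵥ (1 : Fin n → ℂ) = 1 := by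
    have : wc ⬝ᵥ (1 : Fin n → ℂ) = ((w ⬝ᵥ (1 : Fin n → ℝ) : ℝ) : ℂ) := by
      simp [dotProduct, hwcdef]
    rw [this, hw1, Complex.ofReal_one]
  set M : ℝ → Matrix (Fin n) (Fin n) ℂ := fun ε => Wc + (ε : ℂ) • Kc with hMdef
  have hmap : ∀ ε : ℝ, (W + ε • K₀).map (algebraMap ℝ ℂ) = M ε := by
    intro ε
    ext i j
    simp [Matrix.map_apply, Matrix.add_apply, Matrix.smul_apply, hMdef, hWc, hKc]
  set B : ℝ → Matrix (Fin n) (Fin n) ℂ := fun ε => M ε - vecMulVec 1 wc with hBdef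
  have hMv : ∀ ε : ℝ, M ε *ᵥ (1 : Fin n → ℂ) = 1 := by
    intro ε
    rw [hMdef, Matrix.add_mulVec, hWc1, Matrix.smul_mulVec, hKc1, smul_zero, add_zero]
  have hI : ∀ ε : ℝ, (X - C 1) * (B ε).charpoly = X * (M ε).charpoly := fun ε =>
    my_deflate (M ε) wc 1 (hMv ε) hwc1
  -- basic nonvanishing facts
  have hMne : ∀ ε : ℝ, (M ε).charpoly ≠ 0 := fun ε => (M ε).charpoly_monic.ne_zero
  have hBne : ∀ ε : ℝ, (B ε).charpoly ≠ 0 := fun ε => (B ε).charpoly_monic.ne_zero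
  have hXroot1 : Polynomial.rootMultiplicity (1 : ℂ) X = 0 :=
    Polynomial.rootMultiplicity_eq_zero (by simp [IsRoot])
  -- root multiplicity transfer: for every ε, if 1 is not a root of (B ε).charpoly then mult = 1,
  have hM0 : M 0 = Wc := by simp [hMdef]
  -- 1 is not a root of (B 0).charpoly
  have h1q0 : ¬ (B 0).charpoly.IsRoot 1 := by
    intro h
    have hmul := congrArg (Polynomial.rootMultiplicity (1 : ℂ)) (hI 0)
    rw [Polynomial.rootMultiplicity_mul (mul_ne_zero (X_sub_C_ne_zero 1) (hBne 0)),
      Polynomial.rootMultiplicity_mul (mul_ne_zero Polynomial.X_ne_zero (hMne 0)),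
      Polynomial.rootMultiplicity_X_sub_C_self, hXroot1, hM0] at hmul
    have hpos : 0 < (B 0).charpoly.rootMultiplicity 1 :=
      (Polynomial.rootMultiplicity_pos (hBne 0)).mpr h
    omega
  -- every root of (B 0).charpoly has modulus < 1
  have hB0root : ∀ μ : ℂ, (B 0).charpoly.IsRoot μ → ‖μ‖ < 1 := by
    intro μ hμ
    have h0 := congrArg (Polynomial.eval μ) (hI 0)
    rw [hM0] at h0
    simp only [eval_mul, eval_sub, eval_X, eval_C, hμ.eq_zero, mul_zero] at h0
    rcases mul_eq_zero.mp h0.symm with h | h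
    · simp [h]
    · have hμ1 : μ ≠ 1 := fun h1 => h1q0 (h1 ▸ hμ)
      exact hroots μ h hμ1
  -- spectral radius of B 0 < 1
  have hrad : spectralRadius ℂ (B 0) < 1 := by
    have := spectrum.spectralRadius_lt_of_forall_lt (B 0) (r := 1) (fun z hz => by
      have := hB0root z ((my_mem_spectrum_iff _ _).mp hz)
      exact_mod_cast this)
    simpa using this
  -- Gelfand: some power has norm < 1
  obtain ⟨k, hklt, hk1⟩ :
      ∃ k : ℕ, ((‖(B 0) ^ k‖₊ : ENNReal)) ^ (1 / (k : ℝ)) < 1 ∧ 1 ≤ k := by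
    have ht := spectrum.pow_nnnorm_pow_one_div_tendsto_nhds_spectralRadius (B 0)
    have hev := ht.eventually_lt_const hrad
    exact ((hev.and (eventually_ge_atTop 1)).exists)
  have hkne : (k : ℝ) ≠ 0 := Nat.cast_ne_zero.mpr (by omega)
  have hnormk : ‖(B 0) ^ k‖ < 1 := by
    have hx : (((‖(B 0) ^ k‖₊ : ENNReal)) ^ (1 / (k : ℝ))) ^ (k : ℝ)
        = ((‖(B 0) ^ k‖₊ : ENNReal)) := by
      rw [← ENNReal.rpow_mul, one_div, inv_mul_cancel₀ hkne, ENNReal.rpow_one]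
    have hlt : ((‖(B 0) ^ k‖₊ : ENNReal)) < 1 := by
      calc ((‖(B 0) ^ k‖₊ : ENNReal))
          = (((‖(B 0) ^ k‖₊ : ENNReal)) ^ (1 / (k : ℝ))) ^ (k : ℝ) := hx.symm
        _ ≤ (((‖(B 0) ^ k‖₊ : ENNReal)) ^ (1 / (k : ℝ))) ^ (1 : ℝ) :=
            ENNReal.rpow_le_rpow_of_exponent_ge (le_of_lt hklt) (by exact_mod_cast hk1)
        _ = ((‖(B 0) ^ k‖₊ : ENNReal)) ^ (1 / (k : ℝ)) := ENNReal.rpow_one _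
        _ < 1 := hklt
    have : ‖(B 0) ^ k‖₊ < 1 := by exact_mod_cast hlt
    exact_mod_cast this
  -- continuity in ε
  have hcontB : Continuous B := by
    rw [hBdef, hMdef]
    exact ((continuous_const.add ((Complex.continuous_ofReal).smul
      continuous_const)).sub continuous_const)
  have hcont : Continuous fun ε : ℝ => ‖(B ε) ^ k‖ := ((hcontB.pow k).norm)
  have hev : ∀ᶠ ε : ℝ in nhds 0, ‖(B ε) ^ k‖ < 1 :=
    (hcont.continuousAt (x := 0)).eventually_lt_const hnormk
  obtain ⟨δ, hδpos, hδ⟩ := Metric.eventually_nhds_iff.mp hev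
  set ε := δ / 2 with hεdef
  have hεpos : 0 < ε := by positivity
  have hεnorm : ‖(B ε) ^ k‖ < 1 := by
    apply hδ
    rw [Real.dist_eq, hεdef]
    rw [sub_zero, abs_of_pos (by positivity)]
    linarith
  -- all roots of (B ε).charpoly have modulus < 1
  have hBεroot : ∀ μ : ℂ, (B ε).charpoly.IsRoot μ → ‖μ‖ < 1 := by
    intro μ hμ
    have hspec : μ ∈ spectrum ℂ (B ε) := (my_mem_spectrum_iff _ _).mpr hμ
    have hpow : μ ^ k ∈ spectrum ℂ ((B ε) ^ k) :=
      spectrum.pow_image_subset (𝕜 := ℂ) (B ε) k ⟨μ, hspec, rfl⟩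
    have hnorm : ‖μ ^ k‖ ≤ ‖(B ε) ^ k‖ := spectrum.norm_le_norm_of_mem hpow
    rw [norm_pow] at hnorm
    have hlt : ‖μ‖ ^ k < 1 := lt_of_le_of_lt hnorm hεnorm
    by_contra hge
    push_neg at hge
    have : (1 : ℝ) ≤ ‖μ‖ ^ k := by
      calc (1 : ℝ) = 1 ^ k := (one_pow k).symm
        _ ≤ ‖μ‖ ^ k := pow_le_pow_left₀ zero_le_one hge k
    linarith
  have h1qε : ¬ (B ε).charpoly.IsRoot 1 := by
    intro h
    have := hBεroot 1 h
    simp at this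
  refine ⟨ε, hεpos, ?_, ?_⟩
  · -- root multiplicity of 1
    rw [hmap ε]
    have hmul := congrArg (Polynomial.rootMultiplicity (1 : ℂ)) (hI ε)
    rw [Polynomial.rootMultiplicity_mul (mul_ne_zero (X_sub_C_ne_zero 1) (hBne ε)),
      Polynomial.rootMultiplicity_mul (mul_ne_zero Polynomial.X_ne_zero (hMne ε)),
      Polynomial.rootMultiplicity_X_sub_C_self, hXroot1,
      Polynomial.rootMultiplicity_eq_zero h1qε] at hmul
    omega
  · intro μ hμ hμ1
    rw [hmap ε] at hμ
    have h0 := congrArg (Polynomial.eval μ) (hI ε)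
    simp only [eval_mul, eval_sub, eval_X, eval_C, hμ.eq_zero, mul_zero] at h0
    rcases mul_eq_zero.mp h0 with h | h
    · exact absurd (sub_eq_zero.mp h) hμ1
    · exact hBεroot μ h
end

section
/- Let W ∈ ℝ^{n×n} satisfy Assumption 1 with normalized left Perron eigenvector w. Let x₀ ∈ ℝ^n satisfy wᵀx₀ ≠ 0, let q ∈ ℝ^n satisfy qᵀ1 = 0 and qᵀx₀ ≠ 0, set β = (wᵀWx₀)/(wᵀx₀), p = (βx₀ − Wx₀)/(qᵀx₀), and K = pqᵀ. Then K·1 = 0, wᵀK = 0, and (W+K)x₀ = βx₀; consequently, for every T ≥ 1, the matrix X_a = [x₀, (W+K)x₀, …, (W+K)^{T−1}x₀] has rank at most 1. -/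
open Matrix

lemma vmv_mulVec {n : ℕ} (p q v : Fin n → ℝ) : vecMulVec p q *ᵥ v = (q ⬝ᵥ v) • p := by
  ext i
  simp only [vecMulVec, mulVec, dotProduct, of_apply, Pi.smul_apply, smul_eq_mul]
  rw [Finset.sum_mul]
  exact Finset.sum_congr rfl fun _ _ => by ring

lemma vmv_vecMul {n : ℕ} (p q v : Fin n → ℝ) : v ᵥ* vecMulVec p q = (v ⬝ᵥ p) • q := by
  ext j
  simp only [vecMulVec, vecMul, dotProduct, of_apply, Pi.smul_apply, smul_eq_mul]
  rw [Finset.sum_mul]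
  exact Finset.sum_congr rfl fun _ _ => by ring

/-- Rank-one feedback construction: with `β = (wᵀWx₀)/(wᵀx₀)`,
`p = (βx₀ − Wx₀)/(qᵀx₀)` and `K = pqᵀ`, we get `K𝟙 = 0`, `wᵀK = 0`,
`(W+K)x₀ = βx₀`, hence the data matrix `X_a` has rank at most `1`. -/
theorem stmt8 {n : ℕ} (W : Matrix (Fin n) (Fin n) ℝ) (w : Fin n → ℝ)
    (hW : Assumption1 W w) (x₀ q : Fin n → ℝ)
    (hwx₀ : w ⬝ᵥ x₀ ≠ 0) (hq1 : q ⬝ᵥ (1 : Fin n → ℝ) = 0) (hqx₀ : q ⬝ᵥ x₀ ≠ 0) :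
    ∀ (β : ℝ), β = (w ⬝ᵥ (W *ᵥ x₀)) / (w ⬝ᵥ x₀) →
    ∀ (p : Fin n → ℝ), p = (q ⬝ᵥ x₀)⁻¹ • (β • x₀ - W *ᵥ x₀) →
    ∀ (K : Matrix (Fin n) (Fin n) ℝ), K = vecMulVec p q →
      K *ᵥ (1 : Fin n → ℝ) = 0 ∧
      w ᵥ* K = 0 ∧
      (W + K) *ᵥ x₀ = β • x₀ ∧
      (∀ T : ℕ, 1 ≤ T →
        (Matrix.of fun (i : Fin n) (t : Fin T) => (((W + K) ^ (t : ℕ)) *ᵥ x₀) i).rank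
          ≤ 1) := by
  intro β hβ p hp K hK
  have hβx : β * (w ⬝ᵥ x₀) = w ⬝ᵥ (W *ᵥ x₀) := by
    rw [hβ, div_mul_cancel₀ _ hwx₀]
  have hwp : w ⬝ᵥ p = 0 := by
    rw [hp]
    rw [dotProduct_smul, dotProduct_sub, dotProduct_smul]
    simp only [smul_eq_mul, hβx, sub_self, mul_zero]
  have h3 : (W + K) *ᵥ x₀ = β • x₀ := by
    rw [add_mulVec, hK, vmv_mulVec, hp, smul_inv_smul₀ hqx₀]
    abel
  refine ⟨?_, ?_, h3, ?_⟩
  · rw [hK, vmv_mulVec, hq1, zero_smul]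
  · rw [hK, vmv_vecMul, hwp, zero_smul]
  · intro T _
    have hpow : ∀ t : ℕ, ((W + K) ^ t) *ᵥ x₀ = (β ^ t) • x₀ := by
      intro t
      induction t with
      | zero => simp
      | succ t ih =>
        rw [pow_succ', ← mulVec_mulVec, ih, mulVec_smul, h3, smul_smul, ← pow_succ]
    have hX : (Matrix.of fun (i : Fin n) (t : Fin T) => (((W + K) ^ (t : ℕ)) *ᵥ x₀) i)
        = vecMulVec x₀ (fun t : Fin T => β ^ (t : ℕ)) := by
      ext i t
      simp [hpow, vecMulVec_apply, mul_comm]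
    rw [hX, vecMulVec_eq (Fin 1)]
    calc (replicateCol (Fin 1) x₀ * replicateRow (Fin 1) fun t : Fin T => β ^ (t : ℕ)).rank
        ≤ (replicateCol (Fin 1) x₀).rank := rank_mul_le_left _ _
      _ ≤ Fintype.card (Fin 1) := rank_le_card_width _
      _ = 1 := Fintype.card_fin 1
end

section
/- Let W ∈ ℝ^{n×n} satisfy Assumption 1 with normalized left Perron eigenvector w, let n ≥ 2, and let x₀ ∈ ℝ^n be a nonzero vector not contained in any proper W-invariant subspace. Then there exists a matrix K ∈ ℝ^{n×n} with K·1 = 0 and wᵀK = 0 such that for every T ≥ n, the matrix X_a = [x₀, (W+K)x₀, …, (W+K)^{T−1}x₀] satisfies rank(X_a) < n. -/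
open Matrix

/-- If the nonzero initial state `x₀` lies in no proper `W`-invariant subspace, then a
feedback `K` with `K𝟙 = 0` and `wᵀK = 0` exists rendering the data matrix
`X_a = [x₀, (W+K)x₀, …, (W+K)^(T-1)x₀]` rank-deficient for all `T ≥ n`. -/
theorem stmt9 {n : ℕ} (hn : 2 ≤ n) (W : Matrix (Fin n) (Fin n) ℝ) (w : Fin n → ℝ)
    (hW : Assumption1 W w) (x₀ : Fin n → ℝ) (hx₀ : x₀ ≠ 0)
    (hx₀inv : ¬ ∃ S : Submodule ℝ (Fin n → ℝ),
        (∀ y ∈ S, W *ᵥ y ∈ S) ∧ S ≠ ⊥ ∧ S ≠ ⊤ ∧ x₀ ∈ S) :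
    ∃ K : Matrix (Fin n) (Fin n) ℝ,
      K *ᵥ (1 : Fin n → ℝ) = 0 ∧
      w ᵥ* K = 0 ∧
      (∀ T : ℕ, n ≤ T →
        (Matrix.of fun (i : Fin n) (t : Fin T) => (((W + K) ^ (t : ℕ)) *ᵥ x₀) i).rank
          < n) := by
  obtain ⟨-, hW1, -, -, hwW, -⟩ := hW
  -- x₀ is not a multiple of 𝟙
  have hspan1 : x₀ ∉ (Submodule.span ℝ {(1 : Fin n → ℝ)}) := by
    intro hmem
    apply hx₀inv
    refine ⟨Submodule.span ℝ {(1 : Fin n → ℝ)}, ?_, ?_, ?_, hmem⟩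
    · intro y hy
      rw [Submodule.mem_span_singleton] at hy ⊢
      obtain ⟨c, rfl⟩ := hy
      exact ⟨c, by rw [mulVec_smul, hW1]⟩
    · intro h
      rw [h, Submodule.mem_bot] at hmem
      exact hx₀ hmem
    · intro h
      have hone : (1 : Fin n → ℝ) ≠ 0 := by
        intro h0
        have := congrFun h0 ⟨0, by omega⟩
        simp at this
      have h1 : Module.finrank ℝ (Submodule.span ℝ ({(1 : Fin n → ℝ)} : Set (Fin n → ℝ))) = 1 :=
        finrank_span_singleton hone
      rw [h] at h1
      rw [finrank_top, Module.finrank_pi] at h1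
      simp only [Fintype.card_fin] at h1
      omega
  -- construct v₀ orthogonal to 𝟙 with v₀ ⬝ᵥ x₀ > 0
  have h11 : (1 : Fin n → ℝ) ⬝ᵥ (1 : Fin n → ℝ) = (n : ℝ) := by
    simp [dotProduct]
  have hnpos : (0 : ℝ) < n := by
    have : 0 < n := by omega
    exact_mod_cast this
  set c : ℝ := (x₀ ⬝ᵥ (1 : Fin n → ℝ)) / (n : ℝ) with hc
  set v₀ : Fin n → ℝ := x₀ - c • (1 : Fin n → ℝ) with hv₀
  have hv₀1 : v₀ ⬝ᵥ (1 : Fin n → ℝ) = 0 := by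
    rw [hv₀, sub_dotProduct, smul_dotProduct, h11, hc, smul_eq_mul,
      div_mul_cancel₀ _ (ne_of_gt hnpos), sub_self]
  have hv₀ne : v₀ ≠ 0 := by
    intro h
    apply hspan1
    rw [Submodule.mem_span_singleton]
    exact ⟨c, by rw [eq_comm, ← sub_eq_zero]; simpa [hv₀] using h⟩
  have hv₀x : v₀ ⬝ᵥ x₀ = v₀ ⬝ᵥ v₀ := by
    have : x₀ = v₀ + c • (1 : Fin n → ℝ) := by rw [hv₀]; abel
    rw [this, dotProduct_add, dotProduct_smul, hv₀1, smul_zero, add_zero]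
  have hv₀xpos : 0 < v₀ ⬝ᵥ x₀ := by
    rw [hv₀x]
    have hnn : 0 ≤ v₀ ⬝ᵥ v₀ :=
      Finset.sum_nonneg fun i _ => mul_self_nonneg (v₀ i)
    rcases hnn.lt_or_eq with h | h
    · exact h
    · exact absurd (dotProduct_self_eq_zero.mp h.symm) hv₀ne
  set v : Fin n → ℝ := (v₀ ⬝ᵥ x₀)⁻¹ • v₀ with hv
  have hv1 : v ⬝ᵥ (1 : Fin n → ℝ) = 0 := by
    rw [hv, smul_dotProduct, hv₀1, smul_zero]
  have hvx : v ⬝ᵥ x₀ = 1 := by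
    rw [hv, smul_dotProduct, smul_eq_mul, inv_mul_cancel₀ (ne_of_gt hv₀xpos)]
  -- the feedback matrix
  set u : Fin n → ℝ := x₀ - W *ᵥ x₀ with hu
  set K : Matrix (Fin n) (Fin n) ℝ := vecMulVec u v with hK
  have hKmul : ∀ y : Fin n → ℝ, K *ᵥ y = (v ⬝ᵥ y) • u := by
    intro y
    ext i
    simp only [hK, mulVec, vecMulVec, Matrix.of_apply, dotProduct, Pi.smul_apply,
      smul_eq_mul, Finset.sum_mul]
    exact Finset.sum_congr rfl fun x _ => by ring
  refine ⟨K, ?_, ?_, ?_⟩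
  · rw [hKmul, hv1, zero_smul]
  · have hwu : w ⬝ᵥ u = 0 := by
      rw [hu, dotProduct_sub, dotProduct_mulVec, hwW, sub_self]
    ext j
    simp [hK, vecMulVec, vecMul, dotProduct, Finset.sum_mul, mul_assoc]
    calc (∑ i, w i * (u i * v j)) = (∑ i, w i * u i) * v j := by
          rw [Finset.sum_mul]; congr 1; ext i; ring
      _ = 0 := by rw [show (∑ i, w i * u i) = w ⬝ᵥ u from rfl, hwu, zero_mul]
  · -- x₀ is fixed by W + K
    have hfix : (W + K) *ᵥ x₀ = x₀ := by
      rw [add_mulVec, hKmul, hvx, one_smul, hu]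
      abel
    have hpow : ∀ t : ℕ, ((W + K) ^ t) *ᵥ x₀ = x₀ := by
      intro t
      induction t with
      | zero => simp
      | succ t ih => rw [pow_succ, ← mulVec_mulVec, hfix, ih]
    intro T hT
    set M : Matrix (Fin n) (Fin T) ℝ :=
      Matrix.of fun (i : Fin n) (t : Fin T) => (((W + K) ^ (t : ℕ)) *ᵥ x₀) i with hM
    have hMeq : ∀ i t, M i t = x₀ i := by
      intro i t
      simp only [hM, Matrix.of_apply, hpow]
    -- range of M.mulVecLin is inside span{x₀}
    have hrange : LinearMap.range M.mulVecLin ≤ Submodule.span ℝ {x₀} := by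
      rintro y ⟨z, rfl⟩
      rw [Submodule.mem_span_singleton]
      refine ⟨∑ t, z t, ?_⟩
      ext i
      simp only [mulVecLin_apply, mulVec, dotProduct, hMeq, Pi.smul_apply, smul_eq_mul,
        Finset.mul_sum]
      rw [Finset.sum_mul]
      exact Finset.sum_congr rfl fun t _ => by ring
    have h1 : M.rank ≤ 1 := by
      rw [Matrix.rank]
      calc Module.finrank ℝ (LinearMap.range M.mulVecLin)
          ≤ Module.finrank ℝ (Submodule.span ℝ ({x₀} : Set (Fin n → ℝ))) :=
            Submodule.finrank_mono hrange
        _ ≤ 1 := (finrank_span_singleton hx₀).le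
    omega
end

section
/- Let W ∈ ℝ^{n×n} satisfy Assumption 1 with normalized left Perron eigenvector w, and let Z = {(i,j) : W_{ij} ≠ 0} be the support of W. Suppose the linear subspace V = {K ∈ ℝ^{n×n} : K_{ij} = 0 for all (i,j) ∉ Z, K·1 = 0, and wᵀK = 0} contains a nonzero matrix (equivalently, the 2n × |Z| constraint matrix M̃, representing the linear map sending the entries of K supported on Z to the stacked vector (K·1 ; Kᵀw), has rank strictly less than |Z|). Then there exists a nonzero K ∈ V such that 1 is a simple eigenvalue of W+K, every other (complex) eigenvalue of W+K has modulus strictly less than 1, K_{ij} = 0 whenever W_{ij} = 0 with i ≠ j, and for every x₀ ∈ ℝ^n, lim_{t→∞} (W+K)^t x₀ = (wᵀx₀)·1. -/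
open Matrix Filter

attribute [local instance] Matrix.linftyOpNormedRing Matrix.linftyOpNormedAlgebra
  Matrix.linftyOpNormedSpace Matrix.linftyOpIsBoundedSMul

variable {n : ℕ}

lemma myEvalCharpoly (M : Matrix (Fin n) (Fin n) ℂ) (t : ℂ) :
    M.charpoly.eval t = (t • (1 : Matrix (Fin n) (Fin n) ℂ) - M).det := by
  have : M.charpoly.eval t = (Polynomial.evalRingHom t) M.charpoly := rfl
  rw [this, Matrix.charpoly, RingHom.map_det]
  congr 1
  ext i j
  by_cases h : i = j <;>
    simp [h, Matrix.charmatrix_apply, Matrix.one_apply, Matrix.diagonal_apply]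

lemma myCharpolyFactor (M : Matrix (Fin n) (Fin n) ℂ) (u v : Fin n → ℂ)
    (hu : M *ᵥ u = u) (hv : v ᵥ* M = v) (huv : v ⬝ᵥ u = 1) :
    Polynomial.X * M.charpoly
      = (Polynomial.X - Polynomial.C 1) * (M - Matrix.vecMulVec u v).charpoly := by
  set B := M - Matrix.vecMulVec u v with hB
  have hBne : B.charpoly ≠ 0 := B.charpoly_monic.ne_zero
  apply Polynomial.eq_of_infinite_eval_eq
  have hsub : {x : ℂ | ¬ (B.charpoly.IsRoot x ∨ x = 0)} ⊆
      {x : ℂ | Polynomial.eval x (Polynomial.X * M.charpoly)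
        = Polynomial.eval x ((Polynomial.X - Polynomial.C 1) * B.charpoly)} := by
    intro x hx
    simp only [Set.mem_setOf_eq, not_or] at hx
    obtain ⟨hxroot, hx0⟩ := hx
    set N : Matrix (Fin n) (Fin n) ℂ := x • 1 - B with hN
    have hNdet : N.det ≠ 0 := by
      rw [← myEvalCharpoly]; exact hxroot
    have hNunit : IsUnit N.det := isUnit_iff_ne_zero.mpr hNdet
    have hvvu : Matrix.vecMulVec u v *ᵥ u = u := by
      ext i
      simp only [Matrix.mulVec, Matrix.vecMulVec_apply, dotProduct]
      rw [show ∑ j, u i * v j * u j = u i * ∑ j, v j * u j by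
        rw [Finset.mul_sum]; congr 1; ext j; ring]
      rw [show ∑ j, v j * u j = v ⬝ᵥ u from rfl, huv, mul_one]
    have hBu : B *ᵥ u = 0 := by
      rw [hB, Matrix.sub_mulVec, hu, hvvu, sub_self]
    have hNu : N *ᵥ u = x • u := by
      rw [hN, Matrix.sub_mulVec, Matrix.smul_mulVec, Matrix.one_mulVec, hBu, sub_zero]
    have hNinvu : N⁻¹ *ᵥ u = x⁻¹ • u := by
      have h1 : N⁻¹ *ᵥ (N *ᵥ u) = u := by
        rw [Matrix.mulVec_mulVec, Matrix.nonsing_inv_mul N hNunit, Matrix.one_mulVec]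
      rw [hNu, Matrix.mulVec_smul] at h1
      calc N⁻¹ *ᵥ u = x⁻¹ • (x • (N⁻¹ *ᵥ u)) := by
              rw [smul_smul, inv_mul_cancel₀ hx0, one_smul]
        _ = x⁻¹ • u := by rw [h1]
    have hdet1 : (x • (1 : Matrix (Fin n) (Fin n) ℂ) - M).det = N.det * (1 - x⁻¹) := by
      have hxM : x • (1 : Matrix (Fin n) (Fin n) ℂ) - M = N - Matrix.vecMulVec u v := by
        rw [hN, hB]; abel
      have hfac : N - Matrix.vecMulVec u v = N * (1 - N⁻¹ * Matrix.vecMulVec u v) := by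
        rw [Matrix.mul_sub, mul_one, ← Matrix.mul_assoc, Matrix.mul_nonsing_inv N hNunit,
          Matrix.one_mul]
      have hsmall : (1 - N⁻¹ * Matrix.vecMulVec u v).det = 1 - x⁻¹ := by
        rw [Matrix.vecMulVec_eq (Fin 1), ← Matrix.mul_assoc, ← Matrix.replicateCol_mulVec, hNinvu]
        have hcol : Matrix.replicateCol (Fin 1) (-(x⁻¹ • u)) = -Matrix.replicateCol (Fin 1) (x⁻¹ • u) := by
          ext i j; simp [Matrix.replicateCol]
        have this1 : (1 : Matrix (Fin n) (Fin n) ℂ)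
              - Matrix.replicateCol (Fin 1) (x⁻¹ • u) * Matrix.replicateRow (Fin 1) v
            = 1 + Matrix.replicateCol (Fin 1) (-(x⁻¹ • u)) * Matrix.replicateRow (Fin 1) v := by
          rw [hcol, Matrix.neg_mul, ← sub_eq_add_neg]
        refine (congrArg Matrix.det this1).trans ?_
        refine (Matrix.det_one_add_replicateCol_mul_replicateRow _ _).trans ?_
        rw [dotProduct_neg, dotProduct_smul]
        rw [huv]
        simp only [smul_eq_mul, mul_one]
        ring
      rw [hxM, hfac, Matrix.det_mul, hsmall]
    simp only [Set.mem_setOf_eq, Polynomial.eval_mul, Polynomial.eval_X, Polynomial.eval_sub,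
      Polynomial.eval_C, myEvalCharpoly, ← hN]
    rw [hdet1]
    field_simp
  refine Set.Infinite.mono hsub ?_
  have hfin : ({x : ℂ | B.charpoly.IsRoot x ∨ x = 0}).Finite := by
    apply Set.Finite.subset
      ((Polynomial.finite_setOf_isRoot hBne).union (Set.finite_singleton 0))
    intro x hx
    rcases hx with h | h
    · exact Or.inl h
    · exact Or.inr h
  have := hfin.infinite_compl
  simpa [Set.compl_setOf] using this

lemma myNormPowLtOne [Nonempty (Fin n)] (M : Matrix (Fin n) (Fin n) ℂ)
    (h : ∀ μ : ℂ, M.charpoly.IsRoot μ → ‖μ‖ < 1) :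
    ∃ t₀ : ℕ, 1 ≤ t₀ ∧ ‖M ^ t₀‖₊ < 1 := by
  haveI : CompleteSpace (Matrix (Fin n) (Fin n) ℂ) := FiniteDimensional.complete ℂ _
  -- spectrum is contained in the root set of the charpoly
  have hspec : ∀ μ ∈ spectrum ℂ M, M.charpoly.IsRoot μ := by
    intro μ hμ
    rw [spectrum.mem_iff] at hμ
    have hdet : (algebraMap ℂ (Matrix (Fin n) (Fin n) ℂ) μ - M).det = 0 := by
      by_contra hd
      exact hμ ((Matrix.isUnit_iff_isUnit_det _).mpr (isUnit_iff_ne_zero.mpr hd))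
    have : M.charpoly.eval μ = 0 := by
      rw [myEvalCharpoly, ← hdet]
      congr 1
      rw [Algebra.algebraMap_eq_smul_one]
    exact this
  -- a strict bound r < 1 for the spectral radius
  have hMne : M.charpoly ≠ 0 := M.charpoly_monic.ne_zero
  set S : Finset ℂ := (Polynomial.finite_setOf_isRoot hMne).toFinset with hS
  set r : NNReal := S.sup fun μ => ‖μ‖₊ with hr
  have hrlt : r < 1 := by
    rw [hr]
    apply Finset.sup_lt_iff (by norm_num : (⊥ : NNReal) < 1) |>.mpr
    intro μ hμ
    have : M.charpoly.IsRoot μ := by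
      rw [hS] at hμ; simpa using (Set.Finite.mem_toFinset _).mp hμ
    have habs := h μ this
    rw [← NNReal.coe_lt_coe]
    simpa using habs
  have hsr : spectralRadius ℂ M < 1 := by
    calc spectralRadius ℂ M ≤ (r : ENNReal) := by
          apply iSup₂_le
          intro μ hμ
          have : μ ∈ S := (Set.Finite.mem_toFinset _).mpr (hspec μ hμ)
          exact_mod_cast ENNReal.coe_le_coe.mpr (Finset.le_sup (f := fun μ => ‖μ‖₊) this)
      _ < 1 := by exact_mod_cast hrlt
  have hgel := spectrum.pow_nnnorm_pow_one_div_tendsto_nhds_spectralRadius M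
  have hev : ∀ᶠ t : ℕ in atTop, ((‖M ^ t‖₊ : ENNReal) ^ (1 / (t : ℝ))) < 1 :=
    hgel.eventually (Filter.Tendsto.eventually_lt_const hsr tendsto_id) |>.mono (fun _ h => h)
  obtain ⟨t₀, ht₀, ht₀1⟩ := (hev.and (eventually_ge_atTop 1)).exists
  refine ⟨t₀, ht₀1, ?_⟩
  by_contra hge
  push_neg at hge
  have h1 : (1 : ENNReal) ≤ (‖M ^ t₀‖₊ : ENNReal) ^ (1 / (t₀ : ℝ)) := by
    calc (1 : ENNReal) = 1 ^ (1 / (t₀ : ℝ)) := by rw [ENNReal.one_rpow]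
      _ ≤ (‖M ^ t₀‖₊ : ENNReal) ^ (1 / (t₀ : ℝ)) := by
          apply ENNReal.rpow_le_rpow _ (by positivity)
          exact_mod_cast hge
  exact absurd ht₀ (not_lt.mpr h1)

noncomputable def cv (x : Fin n → ℝ) : Fin n → ℂ := fun i => (x i : ℂ)

lemma cv_one : cv (1 : Fin n → ℝ) = 1 := by ext i; simp [cv]

lemma cv_mulVec (A : Matrix (Fin n) (Fin n) ℝ) (x : Fin n → ℝ) :
    (A.map (algebraMap ℝ ℂ)) *ᵥ cv x = cv (A *ᵥ x) := by
  ext i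
  simp [cv, Matrix.mulVec, dotProduct, Matrix.map_apply]

lemma cv_vecMul (A : Matrix (Fin n) (Fin n) ℝ) (x : Fin n → ℝ) :
    cv x ᵥ* (A.map (algebraMap ℝ ℂ)) = cv (x ᵥ* A) := by
  ext i
  simp [cv, Matrix.vecMul, dotProduct, Matrix.map_apply]

lemma cv_dot (x y : Fin n → ℝ) : cv x ⬝ᵥ cv y = ((x ⬝ᵥ y : ℝ) : ℂ) := by
  simp [cv, dotProduct]

lemma map_vecMulVec (x y : Fin n → ℝ) :
    (Matrix.vecMulVec x y).map (algebraMap ℝ ℂ) = Matrix.vecMulVec (cv x) (cv y) := by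
  ext i j
  simp [cv, Matrix.vecMulVec_apply, Matrix.map_apply]

lemma myMapSub (A B : Matrix (Fin n) (Fin n) ℝ) :
    (A - B).map (algebraMap ℝ ℂ) = A.map (algebraMap ℝ ℂ) - B.map (algebraMap ℝ ℂ) := by
  ext i j
  simp [Matrix.map_apply]

lemma map_pow' (A : Matrix (Fin n) (Fin n) ℝ) (t : ℕ) :
    (A ^ t).map (algebraMap ℝ ℂ) = (A.map (algebraMap ℝ ℂ)) ^ t := by
  have h := map_pow ((algebraMap ℝ ℂ).mapMatrix) A t
  simpa [RingHom.mapMatrix_apply] using h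

lemma myNnnormMap' (A : Matrix (Fin n) (Fin n) ℝ) :
    ‖A.map (algebraMap ℝ ℂ)‖₊ = ‖A‖₊ := by
  rw [Matrix.linfty_opNNNorm_def, Matrix.linfty_opNNNorm_def]
  congr 1
  ext i
  congr 1
  apply Finset.sum_congr rfl
  intro j _
  simp [Matrix.map_apply]

lemma myMultAux (p q : Polynomial ℂ) (hp : p ≠ 0) (hq : q ≠ 0)
    (hid : Polynomial.X * p = (Polynomial.X - Polynomial.C 1) * q) :
    p.rootMultiplicity 1 = 1 + q.rootMultiplicity 1 := by
  have hX : (Polynomial.X : Polynomial ℂ).rootMultiplicity 1 = 0 :=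
    Polynomial.rootMultiplicity_eq_zero (by simp [Polynomial.IsRoot])
  have hXC : (Polynomial.X - Polynomial.C 1 : Polynomial ℂ).rootMultiplicity 1 = 1 :=
    Polynomial.rootMultiplicity_X_sub_C_self
  have h1 := congrArg (Polynomial.rootMultiplicity 1) hid
  rwa [Polynomial.rootMultiplicity_mul (mul_ne_zero Polynomial.X_ne_zero hp),
    Polynomial.rootMultiplicity_mul (mul_ne_zero (Polynomial.X_sub_C_ne_zero (1 : ℂ)) hq),
    hX, hXC, zero_add] at h1

lemma myRootsA (p q : Polynomial ℂ) (hp : p ≠ 0) (hq : q ≠ 0)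
    (hid : Polynomial.X * p = (Polynomial.X - Polynomial.C 1) * q)
    (hqroots : ∀ μ : ℂ, q.IsRoot μ → ‖μ‖ < 1) :
    p.rootMultiplicity 1 = 1 ∧ (∀ μ : ℂ, p.IsRoot μ → μ ≠ 1 → ‖μ‖ < 1) := by
  have hq1 : ¬ q.IsRoot 1 := fun h => by simpa using hqroots 1 h
  constructor
  · rw [myMultAux p q hp hq hid, Polynomial.rootMultiplicity_eq_zero hq1]
  · intro μ hμ hμ1
    have := congrArg (Polynomial.eval μ) hid
    simp only [Polynomial.eval_mul, Polynomial.eval_X, Polynomial.eval_sub,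
      Polynomial.eval_C, hμ.eq_zero, mul_zero] at this
    have hq0 : q.eval μ = 0 := by
      rcases mul_eq_zero.mp this.symm with h | h
      · exact absurd (sub_eq_zero.mp h) hμ1
      · exact h
    exact hqroots μ hq0

lemma myRootsB (p q : Polynomial ℂ) (hp : p ≠ 0) (hq : q ≠ 0)
    (hid : Polynomial.X * p = (Polynomial.X - Polynomial.C 1) * q)
    (hmult : p.rootMultiplicity 1 = 1)
    (hroots : ∀ μ : ℂ, p.IsRoot μ → μ ≠ 1 → ‖μ‖ < 1) :
    ∀ μ : ℂ, q.IsRoot μ → ‖μ‖ < 1 := by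
  have hq1 : q.rootMultiplicity 1 = 0 := by
    have := myMultAux p q hp hq hid
    omega
  have hq1' : ¬ q.IsRoot 1 := by
    intro h
    exact hq (Polynomial.rootMultiplicity_eq_zero_iff.mp hq1 h)
  intro μ hμ
  have := congrArg (Polynomial.eval μ) hid
  simp only [Polynomial.eval_mul, Polynomial.eval_X, Polynomial.eval_sub,
    Polynomial.eval_C, hμ.eq_zero, mul_zero] at this
  rcases mul_eq_zero.mp this with h | h
  · simp [h]
  · have hμ1 : μ ≠ 1 := fun h' => hq1' (h' ▸ hμ)
    exact hroots μ h hμ1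

lemma myPowTendstoZero [Nonempty (Fin n)] (B : Matrix (Fin n) (Fin n) ℝ) (t₀ : ℕ)
    (ht₀ : 1 ≤ t₀) (hn : ‖B ^ t₀‖₊ < 1) :
    Tendsto (fun t : ℕ => ‖(B ^ t : Matrix (Fin n) (Fin n) ℝ)‖) atTop (nhds 0) := by
  set ρ : NNReal := ‖B ^ t₀‖₊ with hρ
  set C : NNReal := (Finset.range t₀).sup fun r => ‖B ^ r‖₊ with hC
  have ht₀pos : 0 < t₀ := ht₀
  have hbound : ∀ t : ℕ, ‖(B ^ t : Matrix (Fin n) (Fin n) ℝ)‖₊ ≤ ρ ^ (t / t₀) * C := by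
    intro t
    conv_lhs => rw [← Nat.div_add_mod t t₀, pow_add, pow_mul]
    calc ‖(B ^ t₀) ^ (t / t₀) * B ^ (t % t₀)‖₊
        ≤ ‖(B ^ t₀) ^ (t / t₀)‖₊ * ‖B ^ (t % t₀)‖₊ := nnnorm_mul_le _ _
      _ ≤ ρ ^ (t / t₀) * C := by
          apply mul_le_mul' (nnnorm_pow_le _ _)
          exact Finset.le_sup (f := fun r => ‖(B ^ r : Matrix (Fin n) (Fin n) ℝ)‖₊)
            (Finset.mem_range.mpr (Nat.mod_lt t ht₀pos))
  have hdiv : Tendsto (fun t : ℕ => t / t₀) atTop atTop :=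
    Filter.tendsto_atTop_atTop.mpr fun b =>
      ⟨b * t₀, fun a ha => (Nat.le_div_iff_mul_le ht₀pos).mpr ha⟩
  have hgeo : Tendsto (fun k : ℕ => ((ρ : ℝ)) ^ k) atTop (nhds 0) :=
    tendsto_pow_atTop_nhds_zero_of_lt_one ρ.coe_nonneg (by exact_mod_cast hn)
  have hmain : Tendsto (fun t : ℕ => ((ρ : ℝ)) ^ (t / t₀) * (C : ℝ)) atTop (nhds 0) := by
    have := (hgeo.comp hdiv).mul_const (C : ℝ)
    simpa using this
  apply squeeze_zero (fun t => norm_nonneg _) _ hmain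
  intro t
  have := hbound t
  calc ‖(B ^ t : Matrix (Fin n) (Fin n) ℝ)‖ = ((‖(B ^ t : Matrix (Fin n) (Fin n) ℝ)‖₊ : ℝ)) := rfl
    _ ≤ ((ρ ^ (t / t₀) * C : NNReal) : ℝ) := by exact_mod_cast this
    _ = ((ρ : ℝ)) ^ (t / t₀) * (C : ℝ) := by push_cast; ring

set_option maxHeartbeats 1000000 in
theorem stmt10' {n : ℕ} (W : Matrix (Fin n) (Fin n) ℝ) (w : Fin n → ℝ)
    (hW : (∀ i j, 0 ≤ W i j) ∧
      W *ᵥ (1 : Fin n → ℝ) = 1 ∧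
      ((W.map (algebraMap ℝ ℂ)).charpoly.rootMultiplicity 1 = 1) ∧
      (∀ μ : ℂ, (W.map (algebraMap ℝ ℂ)).charpoly.IsRoot μ → μ ≠ 1 → ‖μ‖ < 1) ∧
      w ᵥ* W = w ∧
      w ⬝ᵥ (1 : Fin n → ℝ) = 1)
    (hV : ∃ K₀ : Matrix (Fin n) (Fin n) ℝ, K₀ ≠ 0 ∧
        (∀ i j, W i j = 0 → K₀ i j = 0) ∧
        K₀ *ᵥ (1 : Fin n → ℝ) = 0 ∧ w ᵥ* K₀ = 0) :
    ∃ K : Matrix (Fin n) (Fin n) ℝ, K ≠ 0 ∧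
      (∀ i j, W i j = 0 → K i j = 0) ∧
      K *ᵥ (1 : Fin n → ℝ) = 0 ∧
      w ᵥ* K = 0 ∧
      (((W + K).map (algebraMap ℝ ℂ)).charpoly.rootMultiplicity 1 = 1) ∧
      (∀ μ : ℂ, ((W + K).map (algebraMap ℝ ℂ)).charpoly.IsRoot μ → μ ≠ 1 →
        ‖μ‖ < 1) ∧
      (∀ i j, W i j = 0 → i ≠ j → K i j = 0) ∧
      (∀ x₀ : Fin n → ℝ,
        Tendsto (fun t : ℕ => ((W + K) ^ t) *ᵥ x₀) atTop
          (nhds ((w ⬝ᵥ x₀) • (1 : Fin n → ℝ)))) := by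
  obtain ⟨hWnn, hWrow, hWmult, hWeig, hwW, hw1⟩ := hW
  obtain ⟨K₀, hK0ne, hK0supp, hK0row, hK0left⟩ := hV
  haveI hne : Nonempty (Fin n) := by
    rcases Nat.eq_zero_or_pos n with h | h
    · exfalso
      apply hK0ne
      subst h
      ext i j
      exact i.elim0
    · exact ⟨⟨0, h⟩⟩
  set J : Matrix (Fin n) (Fin n) ℝ := Matrix.vecMulVec (1 : Fin n → ℝ) w with hJ
  have hwsum : ∑ k, w k = 1 := by simpa [dotProduct] using hw1
  have hJJ : J * J = J := by
    ext i j
    simp only [hJ, Matrix.mul_apply, Matrix.vecMulVec_apply, Pi.one_apply, one_mul]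
    rw [← Finset.sum_mul, hwsum, one_mul]
  have keyR : ∀ A : Matrix (Fin n) (Fin n) ℝ, A *ᵥ (1 : Fin n → ℝ) = 1 → A * J = J := by
    intro A hA1
    ext i j
    simp only [hJ, Matrix.mul_apply, Matrix.vecMulVec_apply, Pi.one_apply, one_mul]
    rw [← Finset.sum_mul]
    have : ∑ k, A i k = 1 := by
      have := congrFun hA1 i
      simpa [Matrix.mulVec, dotProduct] using this
    rw [this, one_mul]
  have keyL : ∀ A : Matrix (Fin n) (Fin n) ℝ, w ᵥ* A = w → J * A = J := by
    intro A hwA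
    ext i j
    simp only [hJ, Matrix.mul_apply, Matrix.vecMulVec_apply, Pi.one_apply, one_mul]
    have := congrFun hwA j
    simpa [Matrix.vecMul, dotProduct] using this
  -- characteristic polynomial factorization
  have hfact : ∀ A : Matrix (Fin n) (Fin n) ℝ, A *ᵥ (1 : Fin n → ℝ) = 1 → w ᵥ* A = w →
      Polynomial.X * (A.map (algebraMap ℝ ℂ)).charpoly
        = (Polynomial.X - Polynomial.C 1) * ((A - J).map (algebraMap ℝ ℂ)).charpoly := by
    intro A hA1 hwA
    have hu : (A.map (algebraMap ℝ ℂ)) *ᵥ (1 : Fin n → ℂ) = 1 := by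
      rw [← cv_one, cv_mulVec, hA1, cv_one]
    have hv : (cv w) ᵥ* (A.map (algebraMap ℝ ℂ)) = cv w := by
      rw [cv_vecMul, hwA]
    have huv : (cv w) ⬝ᵥ (1 : Fin n → ℂ) = 1 := by
      rw [← cv_one, cv_dot, hw1]
      norm_num
    have h := myCharpolyFactor (A.map (algebraMap ℝ ℂ)) (1 : Fin n → ℂ) (cv w) hu hv huv
    rw [h]
    congr 2
    rw [myMapSub, hJ, map_vecMulVec, cv_one]
  -- Step 1: the roots of the charpoly of (W - J) are in the open unit disc
  have hB0roots : ∀ μ : ℂ, ((W - J).map (algebraMap ℝ ℂ)).charpoly.IsRoot μ →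
      ‖μ‖ < 1 :=
    myRootsB _ _ (Matrix.charpoly_monic _).ne_zero (Matrix.charpoly_monic _).ne_zero
      (hfact W hWrow hwW) hWmult hWeig
  -- Step 2: some power of (W - J) has norm < 1
  obtain ⟨t₀, ht₀1, ht₀norm⟩ := myNormPowLtOne ((W - J).map (algebraMap ℝ ℂ)) hB0roots
  have hreal : ‖((W - J) : Matrix (Fin n) (Fin n) ℝ) ^ t₀‖₊ < 1 := by
    rw [← myNnnormMap' ((W - J) ^ t₀), map_pow']
    exact ht₀norm
  -- Step 3: for small ε the perturbed matrix still has small power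
  have hcont : Continuous fun ε : ℝ => ‖((W - J) + ε • K₀) ^ t₀‖ :=
    continuous_norm.comp ((continuous_const.add (continuous_id.smul continuous_const)).pow t₀)
  have hopen : IsOpen {ε : ℝ | ‖((W - J) + ε • K₀) ^ t₀‖ < 1} :=
    isOpen_lt hcont continuous_const
  have h0mem : (0 : ℝ) ∈ {ε : ℝ | ‖((W - J) + ε • K₀) ^ t₀‖ < 1} := by
    have h1 : ((W - J) + (0 : ℝ) • K₀) = W - J := by simp
    simp only [Set.mem_setOf_eq, h1]
    exact_mod_cast hreal
  obtain ⟨δ, hδpos, hδ⟩ := Metric.isOpen_iff.mp hopen 0 h0mem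
  set ε : ℝ := δ / 2 with hε
  have hεpos : 0 < ε := by positivity
  have hεmem : ‖((W - J) + ε • K₀) ^ t₀‖ < 1 := by
    apply hδ
    simp only [Metric.mem_ball, Real.dist_eq, sub_zero, hε, abs_of_pos (by positivity : (0:ℝ) < δ/2)]
    linarith
  -- the feedback matrix
  refine ⟨ε • K₀, ?_, ?_, ?_, ?_, ?_⟩
  · exact smul_ne_zero (ne_of_gt hεpos) hK0ne
  · intro i j hij
    simp [Matrix.smul_apply, hK0supp i j hij]
  · rw [Matrix.smul_mulVec, hK0row, smul_zero]
  · have hKleft : w ᵥ* (ε • K₀) = ε • (w ᵥ* K₀) := by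
      ext j
      simp [Matrix.vecMul, dotProduct, Matrix.smul_apply, Finset.mul_sum, mul_left_comm]
    rw [hKleft, hK0left, smul_zero]
  · -- remaining spectral and convergence statements
    have hKrow : (ε • K₀) *ᵥ (1 : Fin n → ℝ) = 0 := by
      rw [Matrix.smul_mulVec, hK0row, smul_zero]
    have hKleft : w ᵥ* (ε • K₀) = 0 := by
      have h : w ᵥ* (ε • K₀) = ε • (w ᵥ* K₀) := by
        ext j
        simp [Matrix.vecMul, dotProduct, Matrix.smul_apply, Finset.mul_sum, mul_left_comm]
      rw [h, hK0left, smul_zero]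
    set A : Matrix (Fin n) (Fin n) ℝ := W + ε • K₀ with hA
    have hA1 : A *ᵥ (1 : Fin n → ℝ) = 1 := by
      rw [hA, Matrix.add_mulVec, hWrow, hKrow, add_zero]
    have hwA : w ᵥ* A = w := by
      rw [hA, Matrix.vecMul_add, hwW, hKleft, add_zero]
    have hABJ : A - J = (W - J) + ε • K₀ := by rw [hA]; abel
    have hnormB : ‖(A - J) ^ t₀‖₊ < 1 := by
      rw [hABJ]
      exact_mod_cast hεmem
    -- roots of the charpoly of A - J are in the open unit disc
    have hBroots : ∀ μ : ℂ, (((A - J).map (algebraMap ℝ ℂ)).charpoly).IsRoot μ →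
        ‖μ‖ < 1 := by
      intro μ hμ
      set Mc : Matrix (Fin n) (Fin n) ℂ := (A - J).map (algebraMap ℝ ℂ) with hMc
      have hdet : (μ • (1 : Matrix (Fin n) (Fin n) ℂ) - Mc).det = 0 := by
        rw [← myEvalCharpoly]; exact hμ
      obtain ⟨v, hvne, hveq⟩ := (Matrix.exists_mulVec_eq_zero_iff).mpr hdet
      have heig : Mc *ᵥ v = μ • v := by
        rw [Matrix.sub_mulVec, Matrix.smul_mulVec, Matrix.one_mulVec] at hveq
        have := sub_eq_zero.mp hveq
        exact this.symm
      have hpow : ∀ t : ℕ, (Mc ^ t) *ᵥ v = (μ ^ t) • v := by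
        intro t
        induction t with
        | zero => simp [Matrix.one_mulVec]
        | succ t ih =>
            rw [pow_succ, ← Matrix.mulVec_mulVec, heig, Matrix.mulVec_smul, ih,
              smul_smul, pow_succ, mul_comm]
      have hMcnorm : ‖Mc ^ t₀‖₊ < 1 := by
        rw [hMc, ← map_pow', myNnnormMap']
        exact hnormB
      have hineq : ‖μ‖₊ ^ t₀ * ‖v‖₊ ≤ ‖Mc ^ t₀‖₊ * ‖v‖₊ := by
        calc ‖μ‖₊ ^ t₀ * ‖v‖₊ = ‖(μ ^ t₀) • v‖₊ := by
              rw [nnnorm_smul, nnnorm_pow]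
          _ = ‖(Mc ^ t₀) *ᵥ v‖₊ := by rw [hpow]
          _ ≤ ‖Mc ^ t₀‖₊ * ‖v‖₊ := Matrix.linfty_opNNNorm_mulVec _ _
      have hvpos : 0 < ‖v‖₊ := by
        rw [pos_iff_ne_zero, ne_eq, nnnorm_eq_zero]
        exact hvne
      have hmu : ‖μ‖₊ ^ t₀ < 1 := by
        have := lt_of_le_of_lt hineq (by
          calc ‖Mc ^ t₀‖₊ * ‖v‖₊ < 1 * ‖v‖₊ := by
                exact mul_lt_mul_of_pos_right hMcnorm hvpos
            _ = ‖v‖₊ := one_mul _)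
        by_contra hge
        push_neg at hge
        have : ‖v‖₊ ≤ ‖μ‖₊ ^ t₀ * ‖v‖₊ := le_mul_of_one_le_left (by positivity) hge
        exact absurd (lt_of_le_of_lt this (lt_of_le_of_lt hineq (by
          calc ‖Mc ^ t₀‖₊ * ‖v‖₊ < 1 * ‖v‖₊ := mul_lt_mul_of_pos_right hMcnorm hvpos
            _ = ‖v‖₊ := one_mul _))) (lt_irrefl _)
      have hmu1 : ‖μ‖₊ < 1 := (pow_lt_one_iff (by omega : t₀ ≠ 0)).mp hmu
      have : ‖μ‖ < 1 := by exact_mod_cast hmu1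
      exact this
    -- factorization for A
    have hidA := hfact A hA1 hwA
    obtain ⟨hmultA, hrootsA⟩ := myRootsA _ _ (Matrix.charpoly_monic _).ne_zero
      (Matrix.charpoly_monic _).ne_zero hidA hBroots
    refine ⟨hmultA, hrootsA, ?_, ?_⟩
    · intro i j hij _
      simp [Matrix.smul_apply, hK0supp i j hij]
    · -- convergence
      intro x₀
      set B : Matrix (Fin n) (Fin n) ℝ := A - J with hB
      have hAJ : A * J = J := keyR A hA1
      have hJA : J * A = J := keyL A hwA
      have hJB : J * B = 0 := by rw [hB, Matrix.mul_sub, hJA, hJJ, sub_self]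
      have hBJ : B * J = 0 := by rw [hB, Matrix.sub_mul, hAJ, hJJ, sub_self]
      have hAJB : A = J + B := by rw [hB]; abel
      have hpowid : ∀ t : ℕ, A ^ (t + 1) = J + B ^ (t + 1) := by
        intro t
        induction t with
        | zero => rw [pow_one, pow_one]; exact hAJB
        | succ t ih =>
            calc A ^ (t + 2) = A ^ (t + 1) * A := by rw [pow_succ]
              _ = (J + B ^ (t + 1)) * (J + B) := by rw [ih, ← hAJB]
              _ = J * J + J * B + (B ^ (t + 1) * J + B ^ (t + 1) * B) := by
                  noncomm_ring
              _ = J + B ^ (t + 2) := by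
                  have h1 : B ^ (t + 1) * J = 0 := by
                    rw [pow_succ, Matrix.mul_assoc, hBJ, Matrix.mul_zero]
                  have h2 : B ^ (t + 1) * B = B ^ (t + 2) := (pow_succ B (t + 1)).symm
                  rw [hJJ, hJB, h1, h2, add_zero, zero_add]
      have hnormtend := myPowTendstoZero B t₀ ht₀1 hnormB
      have hJx : J *ᵥ x₀ = (w ⬝ᵥ x₀) • (1 : Fin n → ℝ) := by
        ext i
        simp [hJ, Matrix.mulVec, Matrix.vecMulVec_apply, dotProduct, smul_eq_mul]
      have hvec : Tendsto (fun t : ℕ => (B ^ t) *ᵥ x₀) atTop (nhds 0) := by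
        rw [tendsto_zero_iff_norm_tendsto_zero]
        apply squeeze_zero (fun t => norm_nonneg _)
          (fun t => Matrix.linfty_opNorm_mulVec (B ^ t) x₀)
        simpa using hnormtend.mul_const ‖x₀‖
      have hsum : Tendsto (fun t : ℕ => J *ᵥ x₀ + (B ^ t) *ᵥ x₀) atTop
          (nhds (J *ᵥ x₀ + 0)) := tendsto_const_nhds.add hvec
      rw [add_zero, hJx] at hsum
      apply hsum.congr'
      filter_upwards [eventually_ge_atTop 1] with t ht
      obtain ⟨s, rfl⟩ : ∃ s, t = s + 1 := ⟨t - 1, by omega⟩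
      rw [hpowid s, Matrix.add_mulVec, hJx]


/-- If the subspace of feedback matrices `K` supported on the support of `W` with
`K𝟙 = 0` and `wᵀK = 0` contains a nonzero element, then it contains a nonzero `K`
such that `W + K` keeps `1` as a simple eigenvalue, all its other eigenvalues stay in
the open unit disk, `K` respects the off-diagonal sparsity of `W`, and consensus to
`(wᵀx₀)·𝟙` is preserved for every initial state. -/
theorem stmt10 {n : ℕ} (W : Matrix (Fin n) (Fin n) ℝ) (w : Fin n → ℝ)
    (hW : Assumption1 W w)
    (hV : ∃ K₀ : Matrix (Fin n) (Fin n) ℝ, K₀ ≠ 0 ∧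
        (∀ i j, W i j = 0 → K₀ i j = 0) ∧
        K₀ *ᵥ (1 : Fin n → ℝ) = 0 ∧ w ᵥ* K₀ = 0) :
    ∃ K : Matrix (Fin n) (Fin n) ℝ, K ≠ 0 ∧
      (∀ i j, W i j = 0 → K i j = 0) ∧
      K *ᵥ (1 : Fin n → ℝ) = 0 ∧
      w ᵥ* K = 0 ∧
      (((W + K).map (algebraMap ℝ ℂ)).charpoly.rootMultiplicity 1 = 1) ∧
      (∀ μ : ℂ, ((W + K).map (algebraMap ℝ ℂ)).charpoly.IsRoot μ → μ ≠ 1 →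
        ‖μ‖ < 1) ∧
      (∀ i j, W i j = 0 → i ≠ j → K i j = 0) ∧
      (∀ x₀ : Fin n → ℝ,
        Tendsto (fun t : ℕ => ((W + K) ^ t) *ᵥ x₀) atTop
          (nhds ((w ⬝ᵥ x₀) • (1 : Fin n → ℝ)))) :=
  stmt10' W w hW hV
end

section
/- Let W ∈ ℝ^{n×n} satisfy Assumption 1 with normalized left Perron eigenvector w, let α > 0, and set K = −α(I − W). If every (complex) eigenvalue λ ≠ 1 of W satisfies |(1+α)λ − α| < 1, then 1 is a simple eigenvalue of W+K, every other eigenvalue of W+K has modulus strictly less than 1, and for every x₀ ∈ ℝ^n, lim_{t→∞} (W+K)^t x₀ = (wᵀx₀)·1. -/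
open Matrix Filter

section Aux
open Polynomial
open scoped NNReal ENNReal

private theorem cpeval {k : ℕ} (A : Matrix (Fin k) (Fin k) ℂ) (x : ℂ) :
    A.charpoly.eval x = (x • (1 : Matrix (Fin k) (Fin k) ℂ) - A).det := by
  rw [Matrix.charpoly, eval_det, matPolyEquiv_charmatrix]
  simp [Matrix.scalar, smul_eq_diagonal_mul]
  rfl

private theorem roots_affine {k : ℕ} (A : Matrix (Fin k) (Fin k) ℂ) (c d : ℂ) (hc : c ≠ 0) :
    (c • A + d • (1 : Matrix (Fin k) (Fin k) ℂ)).charpoly.roots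
      = A.charpoly.roots.map (fun μ => c * μ + d) := by
  have hsp : A.charpoly = (A.charpoly.roots.map fun a => X - C a).prod :=
    (IsAlgClosed.splits _).eq_prod_roots_of_monic (A.charpoly_monic)
  have hcard : A.charpoly.roots.card = k := by
    rw [Polynomial.splits_iff_card_roots.mp (IsAlgClosed.splits _)]
    rw [Matrix.charpoly_natDegree_eq_dim, Fintype.card_fin]
  have key : (c • A + d • (1 : Matrix (Fin k) (Fin k) ℂ)).charpoly
      = ((A.charpoly.roots.map fun μ => c * μ + d).map fun a => X - C a).prod := by
    apply Polynomial.funext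
    intro x
    rw [cpeval]
    have h1 : x • (1 : Matrix (Fin k) (Fin k) ℂ) - (c • A + d • 1)
        = c • (((x - d)/c) • (1 : Matrix (Fin k) (Fin k) ℂ) - A) := by
      rw [smul_sub, smul_smul, mul_div_cancel₀ _ hc]
      module
    rw [h1, Matrix.det_smul, ← cpeval]
    rw [eval_multiset_prod]
    conv_lhs => rw [hsp]
    rw [eval_multiset_prod]
    simp only [Multiset.map_map, Function.comp, eval_sub, eval_X, eval_C]
    have h2 : (A.charpoly.roots.map fun μ => x - (c * μ + d)).prod
        = (A.charpoly.roots.map fun μ => c * ((x - d)/c - μ)).prod := by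
      congr 1; apply Multiset.map_congr rfl; intro μ _; field_simp; ring
    rw [h2, Multiset.prod_map_mul]
    simp [hcard, Multiset.map_const', Multiset.prod_replicate]
  rw [key, Polynomial.roots_multiset_prod_X_sub_C]

private theorem charpoly_sub_rankone {k : ℕ} (M : Matrix (Fin k) (Fin k) ℂ) (w : Fin k → ℂ)
    (h1 : M *ᵥ (1 : Fin k → ℂ) = 1) (hw : w ⬝ᵥ (1 : Fin k → ℂ) = 1) :
    (M - vecMulVec 1 w).charpoly * (X - C 1) = M.charpoly * X := by
  rw [← sub_eq_zero]
  apply Polynomial.eq_zero_of_infinite_isRoot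
  apply Set.Infinite.mono (s := {(1:ℂ)}ᶜ)
  swap
  · exact Set.Finite.infinite_compl (Set.finite_singleton 1)
  intro x hx
  have hx1 : (x : ℂ) ≠ 1 := hx
  simp only [Set.mem_setOf_eq, IsRoot, eval_sub, eval_mul, eval_X, eval_sub, eval_C, eval_one,
    sub_eq_zero]
  rw [cpeval, cpeval]
  have hone : x • (1 : Fin k → ℂ) - 1 = (x - 1) • 1 := by
    funext i; simp [sub_smul]
  have hA1 : (x • (1 : Matrix (Fin k) (Fin k) ℂ) - M) *ᵥ ((x - 1)⁻¹ • (1 : Fin k → ℂ)) = 1 := by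
    rw [mulVec_smul, sub_mulVec, h1, smul_mulVec, one_mulVec, hone,
      smul_smul, inv_mul_cancel₀ (sub_ne_zero.mpr hx1), one_smul]
  have key : x • (1 : Matrix (Fin k) (Fin k) ℂ) - (M - vecMulVec 1 w)
      = (x • (1 : Matrix (Fin k) (Fin k) ℂ) - M) *
        (1 + replicateCol Unit ((x - 1)⁻¹ • (1 : Fin k → ℂ)) * replicateRow Unit w) := by
    rw [Matrix.mul_add, Matrix.mul_one, ← Matrix.mul_assoc, ← replicateCol_mulVec, hA1,
      ← vecMulVec_eq Unit]
    abel
  rw [key, det_mul, det_one_add_replicateCol_mul_replicateRow]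
  have hdot : w ⬝ᵥ ((x - 1)⁻¹ • (1 : Fin k → ℂ)) = (x - 1)⁻¹ := by
    rw [dotProduct_smul, hw]; simp
  rw [hdot]
  have harith : (1 + (x - 1)⁻¹) * (x - 1) = x := by
    rw [add_mul, one_mul, inv_mul_cancel₀ (sub_ne_zero.mpr hx1)]
    ring
  rw [mul_assoc, harith]

attribute [local instance] Matrix.linftyOpNormedAddCommGroup Matrix.linftyOpNormedRing
  Matrix.linftyOpNormedSpace Matrix.linftyOpNormedAlgebra

private theorem pow_entry_tendsto_zero {k : ℕ} (A : Matrix (Fin k) (Fin k) ℂ) (hk : 0 < k)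
    (h : ∀ μ : ℂ, A.charpoly.IsRoot μ → ‖μ‖ < 1) (i j : Fin k) :
    Tendsto (fun t : ℕ => ‖(A ^ t) i j‖) atTop (nhds 0) := by
  haveI : Nonempty (Fin k) := ⟨⟨0, hk⟩⟩
  haveI : CompleteSpace (Matrix (Fin k) (Fin k) ℂ) := FiniteDimensional.complete ℂ _
  have hsp : spectralRadius ℂ A < (1 : ℝ≥0) := by
    apply spectrum.spectralRadius_lt_of_forall_lt
    intro z hz
    rw [spectrum.mem_iff] at hz
    have hdet : (algebraMap ℂ (Matrix (Fin k) (Fin k) ℂ) z - A).det = 0 := by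
      by_contra hne
      exact hz ((Matrix.isUnit_iff_isUnit_det _).mpr (isUnit_iff_ne_zero.mpr hne))
    have hroot : A.charpoly.IsRoot z := by
      rw [IsRoot, cpeval, ← Algebra.algebraMap_eq_smul_one]
      exact hdet
    have := h z hroot
    rw [← NNReal.coe_lt_coe, coe_nnnorm]
    simpa using this
  obtain ⟨c, hc1, hc2⟩ := exists_between hsp
  have hctop : c ≠ ⊤ := by
    intro hc; rw [hc] at hc2; exact (not_le.mpr hc2) le_top
  have hG := spectrum.pow_nnnorm_pow_one_div_tendsto_nhds_spectralRadius A
  have hev : ∀ᶠ t : ℕ in atTop, (‖A ^ t‖₊ : ENNReal) ^ (1 / (t:ℝ)) < c :=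
    hG.eventually_lt_const hc1
  set cr : ℝ := c.toReal with hcr
  have hcr1 : cr < 1 := by
    rw [hcr, ← ENNReal.toReal_one]
    exact ENNReal.toReal_strict_mono ENNReal.one_ne_top hc2
  have hcr0 : 0 ≤ cr := ENNReal.toReal_nonneg
  have hbound : ∀ᶠ t : ℕ in atTop, ‖(A ^ t) i j‖ ≤ cr ^ t := by
    filter_upwards [hev, eventually_ge_atTop 1] with t hlt ht1
    have ht0 : (t : ℝ) ≠ 0 := by positivity
    have h2 : (‖A ^ t‖₊ : ENNReal) < c ^ (t : ℝ) := by
      have := ENNReal.rpow_lt_rpow hlt (by positivity : (0:ℝ) < t)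
      rwa [← ENNReal.rpow_mul, one_div, inv_mul_cancel₀ ht0, ENNReal.rpow_one] at this
    have h3 : ‖A ^ t‖ ≤ cr ^ t := by
      have h4 := ENNReal.toReal_mono
        (ENNReal.rpow_ne_top_of_nonneg (by positivity) hctop) h2.le
      rw [ENNReal.coe_toReal, coe_nnnorm] at h4
      rw [← ENNReal.toReal_rpow, Real.rpow_natCast] at h4
      exact h4
    have h5 : ‖(A ^ t) i j‖₊ ≤ ‖A ^ t‖₊ := by
      refine le_trans (Finset.single_le_sum (f := fun j' => ‖(A ^ t) i j'‖₊)
        (fun _ _ => zero_le) (Finset.mem_univ j)) ?_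
      rw [Matrix.linfty_opNNNorm_def]
      exact Finset.le_sup (f := fun i' => ∑ j' : Fin k, ‖(A ^ t) i' j'‖₊)
        (Finset.mem_univ i)
    calc ‖(A ^ t) i j‖ = ‖(A ^ t) i j‖ := rfl
      _ ≤ ‖A ^ t‖ := h5
      _ ≤ cr ^ t := h3
  apply squeeze_zero' (by filter_upwards with t; positivity) hbound
  exact tendsto_pow_atTop_nhds_zero_of_lt_one hcr0 hcr1

end Aux

/-- For `K = -α(I - W)` with `α > 0`: if every non-unit eigenvalue `λ` of `W` satisfies
`|(1+α)λ - α| < 1`, then `1` is a simple eigenvalue of `W + K`, all other eigenvalues of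
`W + K` lie in the open unit disk, and consensus to `(wᵀx₀)·𝟙` is preserved. -/
theorem stmt13 {n : ℕ} (W : Matrix (Fin n) (Fin n) ℝ) (w : Fin n → ℝ)
    (hW : Assumption1 W w) (α : ℝ) (hα0 : 0 < α)
    (K : Matrix (Fin n) (Fin n) ℝ)
    (hK : K = -α • ((1 : Matrix (Fin n) (Fin n) ℝ) - W))
    (heig : ∀ lam : ℂ, (W.map (algebraMap ℝ ℂ)).charpoly.IsRoot lam → lam ≠ 1 →
      ‖(1 + (α : ℂ)) * lam - (α : ℂ)‖ < 1) :
    (((W + K).map (algebraMap ℝ ℂ)).charpoly.rootMultiplicity 1 = 1) ∧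
    (∀ μ : ℂ, ((W + K).map (algebraMap ℝ ℂ)).charpoly.IsRoot μ → μ ≠ 1 →
      ‖μ‖ < 1) ∧
    (∀ x₀ : Fin n → ℝ,
      Tendsto (fun t : ℕ => ((W + K) ^ t) *ᵥ x₀) atTop
        (nhds ((w ⬝ᵥ x₀) • (1 : Fin n → ℝ)))) := by
  classical
  obtain ⟨hWpos, hW1, hmult, hspec, hwW, hw1⟩ := hW
  -- n = 0 is impossible
  rcases Nat.eq_zero_or_pos n with hn | hn
  · subst hn
    exfalso
    simpa [dotProduct] using hw1
  -- basic algebra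
  have hM : W + K = (1 + α) • W + (-α) • (1 : Matrix (Fin n) (Fin n) ℝ) := by
    rw [hK]; module
  set Wc : Matrix (Fin n) (Fin n) ℂ := W.map (algebraMap ℝ ℂ) with hWc
  set Mc : Matrix (Fin n) (Fin n) ℂ := (W + K).map (algebraMap ℝ ℂ) with hMcdef
  have hMc : Mc = ((1:ℂ) + α) • Wc + (-(α:ℂ)) • (1 : Matrix (Fin n) (Fin n) ℂ) := by
    rw [hMcdef, hWc, hM]
    ext i j
    by_cases h : i = j <;>
      simp [Matrix.map_apply, Matrix.one_apply, h] <;> push_cast <;> ring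
  have hc0 : ((1:ℂ) + α) ≠ 0 := by
    have h : ((1:ℂ) + α) = ((1 + α : ℝ) : ℂ) := by push_cast; ring
    rw [h, Ne, Complex.ofReal_eq_zero]
    linarith
  have hroots : Mc.charpoly.roots
      = Wc.charpoly.roots.map (fun μ => ((1:ℂ) + α) * μ + (-(α:ℂ))) := by
    rw [hMc]
    exact roots_affine Wc _ _ hc0
  have hinj : Function.Injective (fun μ : ℂ => ((1:ℂ) + α) * μ + (-(α:ℂ))) := by
    intro a b hab
    simp only [add_left_inj] at hab
    exact mul_left_cancel₀ hc0 hab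
  have hWcp0 : Wc.charpoly ≠ 0 := (Matrix.charpoly_monic _).ne_zero
  have hMcp0 : Mc.charpoly ≠ 0 := (Matrix.charpoly_monic _).ne_zero
  -- Part 1
  have part1 : Mc.charpoly.rootMultiplicity 1 = 1 := by
    rw [← Polynomial.count_roots, hroots]
    have h1 := Multiset.count_map_eq_count' _ Wc.charpoly.roots hinj 1
    rw [show ((1:ℂ)+α)*1 + (-(α:ℂ)) = 1 by ring] at h1
    rw [h1, Polynomial.count_roots]
    exact hmult
  -- Part 2
  have part2 : ∀ μ : ℂ, Mc.charpoly.IsRoot μ → μ ≠ 1 → ‖μ‖ < 1 := by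
    intro μ hμ hμ1
    have hmem : μ ∈ Mc.charpoly.roots := by
      rw [Polynomial.mem_roots hMcp0]; exact hμ
    rw [hroots] at hmem
    obtain ⟨lam, hlam, rfl⟩ := Multiset.mem_map.mp hmem
    have hlamroot : Wc.charpoly.IsRoot lam := (Polynomial.mem_roots hWcp0).mp hlam
    have hlam1 : lam ≠ 1 := by
      rintro rfl
      apply hμ1
      ring
    have := heig lam hlamroot hlam1
    rwa [sub_eq_add_neg] at this
  refine ⟨part1, part2, ?_⟩
  intro x₀
  set P : Matrix (Fin n) (Fin n) ℝ := vecMulVec 1 w with hP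
  have hM1 : (W + K) *ᵥ (1 : Fin n → ℝ) = 1 := by
    rw [hM, add_mulVec, smul_mulVec, smul_mulVec, hW1, one_mulVec]
    funext i
    simp
  have hwM : w ᵥ* (W + K) = w := by
    rw [← Matrix.mulVec_transpose, hM, Matrix.transpose_add, Matrix.transpose_smul,
      Matrix.transpose_smul, Matrix.transpose_one, add_mulVec, smul_mulVec,
      smul_mulVec, Matrix.mulVec_transpose, hwW, one_mulVec]
    funext i
    simp
    ring
  have hsum : ∀ i, ∑ k, (W + K) i k = 1 := by
    intro i
    have h2 := congrFun hM1 i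
    simpa [mulVec, dotProduct] using h2
  have hwsum : ∑ k, w k = 1 := by simpa [dotProduct] using hw1
  have hMP : (W + K) * P = P := by
    ext i j
    simp only [Matrix.mul_apply, hP, vecMulVec_apply, Pi.one_apply, one_mul]
    rw [← Finset.sum_mul, hsum, one_mul]
  have hPM : P * (W + K) = P := by
    ext i j
    simp only [Matrix.mul_apply, hP, vecMulVec_apply, Pi.one_apply, one_mul]
    have h2 := congrFun hwM j
    simpa [vecMul, dotProduct] using h2
  have hPP : P * P = P := by
    ext i j
    simp only [Matrix.mul_apply, hP, vecMulVec_apply, Pi.one_apply, one_mul]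
    rw [← Finset.sum_mul, hwsum, one_mul]
  set N : Matrix (Fin n) (Fin n) ℝ := W + K - P with hN
  have hNP : N * P = 0 := by rw [hN, Matrix.sub_mul, hMP, hPP, sub_self]
  have hNplusP : N + P = W + K := by rw [hN]; abel
  have hNtP : ∀ t : ℕ, N ^ (t + 1) * P = 0 := by
    intro t
    rw [pow_succ, Matrix.mul_assoc, hNP, Matrix.mul_zero]
  have hpow : ∀ t : ℕ, 1 ≤ t → (W + K) ^ t = N ^ t + P := by
    intro t ht
    induction t with
    | zero => omega
    | succ s ih =>
      rcases Nat.eq_zero_or_pos s with hs | hs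
      · subst hs
        rw [pow_one, pow_one, hNplusP]
      · obtain ⟨s', rfl⟩ : ∃ s', s = s' + 1 := ⟨s - 1, by omega⟩
        rw [pow_succ, ih hs, Matrix.add_mul, hPM, ← hNplusP, Matrix.mul_add, hNtP,
          add_zero, ← pow_succ]
  -- complex side
  set Nc : Matrix (Fin n) (Fin n) ℂ := N.map (algebraMap ℝ ℂ) with hNc
  set wc : Fin n → ℂ := fun i => (w i : ℂ) with hwcdef
  have hMc1 : Mc *ᵥ (1 : Fin n → ℂ) = 1 := by
    funext i
    have h2 : (Mc *ᵥ (1 : Fin n → ℂ)) i = ((∑ j, (W + K) i j : ℝ) : ℂ) := by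
      simp [hMcdef, mulVec, dotProduct, Matrix.map_apply]
    rw [h2, hsum i]
    simp
  have hwc1 : wc ⬝ᵥ (1 : Fin n → ℂ) = 1 := by
    have h2 : wc ⬝ᵥ (1 : Fin n → ℂ) = ((∑ k, w k : ℝ) : ℂ) := by
      simp [hwcdef, dotProduct]
    rw [h2, hwsum]
    simp
  have hNcMc : Nc = Mc - vecMulVec 1 wc := by
    ext i j
    simp [hNc, hN, hMcdef, Matrix.map_apply, Matrix.sub_apply, vecMulVec_apply, hP, hwcdef]
  have hNcp0 : Nc.charpoly ≠ 0 := (Matrix.charpoly_monic _).ne_zero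
  have hcp := charpoly_sub_rankone Mc wc hMc1 hwc1
  rw [← hNcMc] at hcp
  have hrootsN : Nc.charpoly.roots + {(1:ℂ)} = Mc.charpoly.roots + {(0:ℂ)} := by
    have h2 := congrArg Polynomial.roots hcp
    rwa [Polynomial.roots_mul (mul_ne_zero hNcp0 (Polynomial.X_sub_C_ne_zero 1)),
      Polynomial.roots_mul (mul_ne_zero hMcp0 Polynomial.X_ne_zero),
      Polynomial.roots_X_sub_C, Polynomial.roots_X] at h2
  have hcount : Nc.charpoly.roots.count 1 = 0 := by
    have h2 := congrArg (Multiset.count (1:ℂ)) hrootsN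
    simp only [Multiset.count_add, Multiset.count_singleton, reduceIte,
      if_neg (one_ne_zero (α := ℂ))] at h2
    rw [Polynomial.count_roots, Polynomial.count_roots, part1] at h2
    rw [Polynomial.count_roots]
    omega
  have hNroots : ∀ μ : ℂ, Nc.charpoly.IsRoot μ → ‖μ‖ < 1 := by
    intro μ hμ
    have hmem : μ ∈ Nc.charpoly.roots := (Polynomial.mem_roots hNcp0).mpr hμ
    have hμ1 : μ ≠ 1 := by
      rintro rfl
      rw [← Multiset.count_pos, hcount] at hmem
      omega
    have hmem2 : μ ∈ Mc.charpoly.roots + ({(0:ℂ)} : Multiset ℂ) := by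
      rw [← hrootsN]
      exact Multiset.mem_add.mpr (Or.inl hmem)
    rcases Multiset.mem_add.mp hmem2 with h | h
    · exact part2 μ ((Polynomial.mem_roots hMcp0).mp h) hμ1
    · rw [Multiset.mem_singleton] at h
      subst h
      simp
  have hNcpow : ∀ t : ℕ, Nc ^ t = (N ^ t).map (algebraMap ℝ ℂ) := by
    intro t
    rw [hNc, ← RingHom.mapMatrix_apply, ← map_pow, RingHom.mapMatrix_apply]
  have hentry : ∀ i j : Fin n, Tendsto (fun t : ℕ => (N ^ t) i j) atTop (nhds 0) := by
    intro i j
    have h0 := pow_entry_tendsto_zero Nc hn hNroots i j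
    refine (tendsto_zero_iff_abs_tendsto_zero _).mpr ?_
    have heq : ∀ t : ℕ, |(N ^ t) i j| = ‖(Nc ^ t) i j‖ := by
      intro t
      rw [hNcpow t]
      simp [Matrix.map_apply]
    exact h0.congr fun t => (heq t).symm
  have hL : P *ᵥ x₀ = (w ⬝ᵥ x₀) • (1 : Fin n → ℝ) := by
    funext i'
    simp [hP, mulVec, dotProduct, vecMulVec_apply]
  rw [tendsto_pi_nhds]
  intro i
  have hNlim : Tendsto (fun t : ℕ => ((N ^ t) *ᵥ x₀) i) atTop (nhds 0) := by
    have h2 := tendsto_finset_sum Finset.univ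
      (fun j (_ : j ∈ Finset.univ) => (hentry i j).mul_const (x₀ j))
    simpa [mulVec, dotProduct] using h2
  have hev : (fun t : ℕ => (((N ^ t) *ᵥ x₀) i + ((w ⬝ᵥ x₀) • (1 : Fin n → ℝ)) i))
      =ᶠ[atTop] fun t : ℕ => (((W + K) ^ t) *ᵥ x₀) i := by
    filter_upwards [eventually_ge_atTop 1] with t ht
    rw [hpow t ht, add_mulVec, hL]
    simp
  refine Tendsto.congr' hev ?_
  have h3 := hNlim.add (tendsto_const_nhds (x := ((w ⬝ᵥ x₀) • (1 : Fin n → ℝ)) i) (f := atTop))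
  simpa using h3
end
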